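/- arXiv:2104.15113 — 2 statements merged into one kernel-verified Lean document; each statement's English description precedes it below -/
import Mathlib

section
/- Let G' be a graph with a spanning tree T'; colour the edges of T' green and all other edges of G' black. If (G,T) is obtained from (G',T') by either a Tutte-extension or a diamond-extension, then G − E(T) decomposes into a disjoint union of cycles and a matching if and only if G' − E(T') does. -/
open SimpleGraph

/-- A (finite) simple graph is *cubic* if every vertex has exactly three neighbours. -/
def IsCubic {V : Type*} (G : SimpleGraph V) : Prop :=
  ∀ a : V, (G.neighborSet a).ncard = 3

/-- `(T, C, M)` is a *3-decomposition* of `G`: the edge set of `G` is partitioned into a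
spanning tree `T`, a 2-regular subgraph `C` and a (possibly empty) matching `M`. -/
def IsThreeDecomposition {V : Type*} (G T C M : SimpleGraph V) : Prop :=
  T.edgeSet ∪ C.edgeSet ∪ M.edgeSet = G.edgeSet ∧
  Disjoint T.edgeSet C.edgeSet ∧
  Disjoint T.edgeSet M.edgeSet ∧
  Disjoint C.edgeSet M.edgeSet ∧
  T.IsTree ∧
  (∀ a : V, (C.neighborSet a).ncard = 0 ∨ (C.neighborSet a).ncard = 2) ∧
  (∀ a : V, (M.neighborSet a).ncard ≤ 1)

def HasThreeDecomposition {V : Type*} (G : SimpleGraph V) : Prop :=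
  ∃ T C M : SimpleGraph V, IsThreeDecomposition G T C M

/-- A graph is *3-connected* if it has more than three vertices and stays connected after
removing any set of at most two vertices. -/
def ThreeConnected {V : Type*} (G : SimpleGraph V) : Prop :=
  3 < Nat.card V ∧ ∀ s : Set V, s.ncard ≤ 2 → (SimpleGraph.induce sᶜ G).Connected

/-- `G` contains a subgraph isomorphic to `S`. -/
def ContainsCopy {α V : Type*} (S : SimpleGraph α) (G : SimpleGraph V) : Prop :=
  ∃ f : α ↪ V, ∀ a b : α, S.Adj a b → G.Adj (f a) (f b)

/-- `G` is a minimum-order counterexample to the 3-decomposition conjecture among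
3-connected cubic graphs. -/
def IsMinCounterexample {V : Type*} (G : SimpleGraph V) : Prop :=
  Finite V ∧ IsCubic G ∧ ThreeConnected G ∧ ¬ HasThreeDecomposition G ∧
  ∀ (W : Type) (H : SimpleGraph W), Finite W → IsCubic H → ThreeConnected H →
    ¬ HasThreeDecomposition H → Nat.card V ≤ Nat.card W

/-- A graph `S` is a *reducible configuration* if no minimum-order 3-connected
counterexample to the 3-decomposition conjecture contains it as a subgraph. -/
def Reducible {α : Type*} (S : SimpleGraph α) : Prop :=
  ∀ (V : Type) (G : SimpleGraph V), IsMinCounterexample G → ¬ ContainsCopy S G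

/-! ### The six configurations -/

def triangle : SimpleGraph (Fin 3) := ⊤

def k23 : SimpleGraph (Fin 2 ⊕ Fin 3) := completeBipartiteGraph (Fin 2) (Fin 3)

/-- The domino: two squares sharing an edge (`u5u6`); vertices `u1,…,u6 ~ 0,…,5`. -/
def domino : SimpleGraph (Fin 6) :=
  SimpleGraph.fromEdgeSet {s(0, 1), s(0, 4), s(1, 5), s(4, 5), s(2, 4), s(3, 5), s(2, 3)}

/-- The twin-house; vertices `u1,…,u6 ~ 0,…,5`. -/
def twinHouse : SimpleGraph (Fin 6) :=
  SimpleGraph.fromEdgeSet {s(0, 1), s(0, 4), s(1, 5), s(2, 4), s(2, 5), s(3, 4), s(3, 5)}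

/-- The claw-square: a square `w1w2w3w4 ~ 0,1,2,3`, a claw with centre `c ~ 4` and leaves
`l1,l2,l3 ~ 5,6,7`, together with the edges `l1w1, l2w2, l3w3`. -/
def clawSquare : SimpleGraph (Fin 8) :=
  SimpleGraph.fromEdgeSet
    {s(0, 1), s(1, 2), s(2, 3), s(3, 0), s(4, 5), s(4, 6), s(4, 7), s(5, 0), s(6, 1), s(7, 2)}

/-- The Petersen graph: outer 5-cycle on `inl`, inner pentagram on `inr`, plus spokes. -/
def petersen : SimpleGraph (Fin 5 ⊕ Fin 5) :=
  SimpleGraph.fromRel fun a b =>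
    match a, b with
    | Sum.inl i, Sum.inl j => j = i + 1
    | Sum.inl i, Sum.inr j => i = j
    | Sum.inr i, Sum.inr j => j = i + 2
    | _, _ => False

/-- The Petersen graph with the vertex `inl 0` removed. -/
def petersenMinusVertex : SimpleGraph {v : Fin 5 ⊕ Fin 5 | v ≠ Sum.inl 0} :=
  SimpleGraph.induce {v : Fin 5 ⊕ Fin 5 | v ≠ Sum.inl 0} petersen
/-! ### Templates and transformations -/

/-- `X` is a template graph: inner vertices (`inl`) have degree 3, outer vertices (`inr`)
have degree 1. -/
def IsTemplate {I O : Type*} (X : SimpleGraph (I ⊕ O)) : Prop :=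
  (∀ i : I, (X.neighborSet (Sum.inl i)).ncard = 3) ∧
  (∀ o : O, (X.neighborSet (Sum.inr o)).ncard = 1)

/-- The result of removing the copy (under `φ`) of the core of a template graph from `G`
and replacing it by the core of the template graph `Y`, attaching the core of `Y` to the
rest of `G` according to the outer vertices (the attachment being recorded by `ψ`). -/
def transform {I J O V : Type*} (Y : SimpleGraph (J ⊕ O)) (G : SimpleGraph V)
    (φ : I ↪ V) (ψ : O → {a : V // a ∉ Set.range φ}) :
    SimpleGraph ({a : V // a ∉ Set.range φ} ⊕ J) :=
  SimpleGraph.fromRel fun x y =>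
    match x, y with
    | Sum.inl a, Sum.inl b => G.Adj a.1 b.1
    | Sum.inr j, Sum.inl a => ∃ o : O, Y.Adj (Sum.inl j) (Sum.inr o) ∧ ψ o = a
    | Sum.inr j, Sum.inr j' => Y.Adj (Sum.inl j) (Sum.inl j')
    | Sum.inl _, Sum.inr _ => False

/-- `φ` embeds the core of the template graph `X` into `G` as an induced subgraph, and for
every inner vertex `i` the neighbours of `φ i` outside the copy are exactly the images under
`ψ` of the outer vertices of `X` attached to `i` (one distinct neighbour for each). -/
def IsCoreEmbedding {I O V : Type*} (X : SimpleGraph (I ⊕ O)) (G : SimpleGraph V)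
    (φ : I ↪ V) (ψ : O → {a : V // a ∉ Set.range φ}) : Prop :=
  (∀ i i' : I, G.Adj (φ i) (φ i') ↔ X.Adj (Sum.inl i) (Sum.inl i')) ∧
  (∀ (i : I) (a : {a : V // a ∉ Set.range φ}),
    G.Adj (φ i) a.1 ↔ ∃ o : O, X.Adj (Sum.inl i) (Sum.inr o) ∧ ψ o = a) ∧
  (∀ i : I, Set.InjOn ψ {o : O | X.Adj (Sum.inl i) (Sum.inr o)})

/-- The transformation along `Y` with attachments `ψ` produces no parallel edges
(the result is a simple graph). -/
def AttachSimple {J O α : Type*} (Y : SimpleGraph (J ⊕ O)) (ψ : O → α) : Prop :=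
  ∀ j : J, Set.InjOn ψ {o : O | Y.Adj (Sum.inl j) (Sum.inr o)}

/-- `H` is an `(X,Y)`-transformation of `G`. -/
def IsTransformationOf {I J O V W : Type*} (X : SimpleGraph (I ⊕ O)) (Y : SimpleGraph (J ⊕ O))
    (G : SimpleGraph V) (H : SimpleGraph W) : Prop :=
  ∃ (φ : I ↪ V) (ψ : O → {a : V // a ∉ Set.range φ}),
    IsCoreEmbedding X G φ ψ ∧ AttachSimple Y ψ ∧ Nonempty (H ≃g transform Y G φ ψ)

/-- An `(X,Y)`-extension is *3-compatible* if for every cubic graph `G` with a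
3-decomposition, every extension `H = G[X → Y]` of `G` also has a 3-decomposition. -/
def ThreeCompatible {I J O : Type*} (X : SimpleGraph (I ⊕ O)) (Y : SimpleGraph (J ⊕ O)) : Prop :=
  ∀ (V W : Type) (G : SimpleGraph V) (H : SimpleGraph W), Finite V → Finite W →
    IsCubic G → HasThreeDecomposition G → IsTransformationOf X Y G H →
    HasThreeDecomposition H

/-! ### Concrete template graphs -/

/-- Template graph of the single vertex `K₁` with outer vertices `O`. -/
def starT (O : Type*) : SimpleGraph (Fin 1 ⊕ O) :=
  SimpleGraph.fromRel fun a b =>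
    match a, b with
    | Sum.inl _, Sum.inr _ => True
    | _, _ => False

/-- Template graph of the triangle: outer vertex `o` is attached to the inner vertex `o`. -/
def triangleT : SimpleGraph (Fin 3 ⊕ Fin 3) :=
  SimpleGraph.fromRel fun a b =>
    match a, b with
    | Sum.inl i, Sum.inl j => i ≠ j
    | Sum.inl i, Sum.inr o => i = o
    | _, _ => False

/-- Template graph of the `K₂,₃`: the outer vertices are attached to the three
degree-2 vertices of the `K₂,₃`. -/
def k23T : SimpleGraph ((Fin 2 ⊕ Fin 3) ⊕ Fin 3) :=
  SimpleGraph.fromRel fun a b =>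
    match a, b with
    | Sum.inl (Sum.inl _), Sum.inl (Sum.inr _) => True
    | Sum.inl (Sum.inr i), Sum.inr o => i = o
    | _, _ => False

/-- Template graph of the Petersen graph minus a vertex: the outer vertices are attached to
its three degree-2 vertices. -/
def petersenMinusVertexT : SimpleGraph ({v : Fin 5 ⊕ Fin 5 // v ≠ Sum.inl 0} ⊕ Fin 3) :=
  SimpleGraph.fromRel fun a b =>
    match a, b with
    | Sum.inl v, Sum.inl w => petersen.Adj v.1 w.1
    | Sum.inl v, Sum.inr o =>
        (o = 0 ∧ v.1 = Sum.inl 1) ∨ (o = 1 ∧ v.1 = Sum.inl 4) ∨ (o = 2 ∧ v.1 = Sum.inr 0)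
    | _, _ => False

/-- Template graph of an edge `u1u2` with four outer vertices: outer vertices `0, 1` are
attached to `u1 ~ inl 0` and outer vertices `2, 3` are attached to `u2 ~ inl 1`. -/
def edgeT : SimpleGraph (Fin 2 ⊕ Fin 4) :=
  SimpleGraph.fromRel fun a b =>
    match a, b with
    | Sum.inl i, Sum.inl j => i ≠ j
    | Sum.inl i, Sum.inr o => (i = 0 ∧ (o = 0 ∨ o = 1)) ∨ (i = 1 ∧ (o = 2 ∨ o = 3))
    | _, _ => False

/-- Template graph of the domino matching `edgeT`: outer vertices `0, 1` are attached to
`d1 ~ 0` and `d3 ~ 2`, outer vertices `2, 3` to `d2 ~ 1` and `d4 ~ 3`. -/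
def dominoT : SimpleGraph (Fin 6 ⊕ Fin 4) :=
  SimpleGraph.fromRel fun a b =>
    match a, b with
    | Sum.inl i, Sum.inl j => domino.Adj i j
    | Sum.inl i, Sum.inr o =>
        (i = 0 ∧ o = 0) ∨ (i = 2 ∧ o = 1) ∨ (i = 1 ∧ o = 2) ∨ (i = 3 ∧ o = 3)
    | _, _ => False

/-- Template graph of the square (the 4-cycle `u1u2u4u3u1 ~ 0,1,3,2`): outer vertex `i` is
attached to the vertex `i`. -/
def squareT : SimpleGraph (Fin 4 ⊕ Fin 4) :=
  SimpleGraph.fromRel fun a b =>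
    match a, b with
    | Sum.inl i, Sum.inl j =>
        (i = 0 ∧ j = 1) ∨ (i = 1 ∧ j = 3) ∨ (i = 3 ∧ j = 2) ∨ (i = 2 ∧ j = 0)
    | Sum.inl i, Sum.inr o => i = o
    | _, _ => False

/-- Template graph of the claw-square: its degree-2 vertices `l1, l2, l3, w4 ~ 5, 6, 7, 3`
are attached to the outer vertices `0, 1, 2, 3` respectively. -/
def clawSquareT : SimpleGraph (Fin 8 ⊕ Fin 4) :=
  SimpleGraph.fromRel fun a b =>
    match a, b with
    | Sum.inl i, Sum.inl j => clawSquare.Adj i j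
    | Sum.inl i, Sum.inr o =>
        (i = 5 ∧ o = 0) ∨ (i = 6 ∧ o = 1) ∨ (i = 7 ∧ o = 2) ∨ (i = 3 ∧ o = 3)
    | _, _ => False

/-- Template graph of the twin-house: its degree-2 vertices `u1, …, u4 ~ 0, …, 3` are
attached to the outer vertices `0, …, 3` respectively. -/
def twinHouseT : SimpleGraph (Fin 6 ⊕ Fin 4) :=
  SimpleGraph.fromRel fun a b =>
    match a, b with
    | Sum.inl i, Sum.inl j => twinHouse.Adj i j
    | Sum.inl i, Sum.inr o => i.val = o.val
    | _, _ => False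

/-- Template graph of the domino: its degree-2 vertices `u1, …, u4 ~ 0, …, 3` are attached
to the outer vertices `0, …, 3` respectively. -/
def dominoT4 : SimpleGraph (Fin 6 ⊕ Fin 4) :=
  SimpleGraph.fromRel fun a b =>
    match a, b with
    | Sum.inl i, Sum.inl j => domino.Adj i j
    | Sum.inl i, Sum.inr o => i.val = o.val
    | _, _ => False

/-- Template graph of a single edge `u1u2` with four outer vertices: the new `u1 ~ inl 0`
is attached to the outer vertices `0, 2` (formerly at `u1` and `u3` of the square) and the
new `u2 ~ inl 1` to the outer vertices `1, 3`. -/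
def edgeT4 : SimpleGraph (Fin 2 ⊕ Fin 4) :=
  SimpleGraph.fromRel fun a b =>
    match a, b with
    | Sum.inl i, Sum.inl j => i ≠ j
    | Sum.inl i, Sum.inr o => (i = 0 ∧ (o = 0 ∨ o = 2)) ∨ (i = 1 ∧ (o = 1 ∨ o = 3))
    | _, _ => False
/-! ### Tutte- and diamond-extensions -/

/-- The graph obtained from `G` by subdividing the edges `ab` and `cd` (with subdivision
vertices `inr 0` and `inr 1`) and joining the two subdivision vertices by a new edge. -/
def tutteGraph {V : Type*} (G : SimpleGraph V) (a b c d : V) : SimpleGraph (V ⊕ Fin 2) :=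
  SimpleGraph.fromEdgeSet
    (((Sym2.map (Sum.inl : V → V ⊕ Fin 2) '' G.edgeSet) \
        {s(Sum.inl a, Sum.inl b), s(Sum.inl c, Sum.inl d)}) ∪
      {s(Sum.inl a, Sum.inr 0), s(Sum.inr 0, Sum.inl b),
       s(Sum.inl c, Sum.inr 1), s(Sum.inr 1, Sum.inl d),
       s(Sum.inr 0, Sum.inr 1)})

/-- The green (tree) part after a Tutte-extension: the four half-edges obtained by
subdividing the two green edges `ab` and `cd` are green, the new edge joining the two
subdivision vertices is black. -/
def tutteTree {V : Type*} (T : SimpleGraph V) (a b c d : V) : SimpleGraph (V ⊕ Fin 2) :=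
  SimpleGraph.fromEdgeSet
    (((Sym2.map (Sum.inl : V → V ⊕ Fin 2) '' T.edgeSet) \
        {s(Sum.inl a, Sum.inl b), s(Sum.inl c, Sum.inl d)}) ∪
      {s(Sum.inl a, Sum.inr 0), s(Sum.inr 0, Sum.inl b),
       s(Sum.inl c, Sum.inr 1), s(Sum.inr 1, Sum.inl d)})

/-- The graph obtained from `G` by a diamond-extension at the edge `xy`: remove `xy`,
add a diamond (a `K₄` minus the edge between its degree-2 vertices `inr 0` and `inr 3`)
and join `inr 0` to `x` and `inr 3` to `y`. -/
def diamondGraph {V : Type*} (G : SimpleGraph V) (x y : V) : SimpleGraph (V ⊕ Fin 4) :=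
  SimpleGraph.fromEdgeSet
    (((Sym2.map (Sum.inl : V → V ⊕ Fin 4) '' G.edgeSet) \ {s(Sum.inl x, Sum.inl y)}) ∪
      {s(Sum.inl x, Sum.inr 0), s(Sum.inr 3, Sum.inl y),
       s(Sum.inr 0, Sum.inr 1), s(Sum.inr 1, Sum.inr 2), s(Sum.inr 2, Sum.inr 3),
       s(Sum.inr 0, Sum.inr 2), s(Sum.inr 1, Sum.inr 3)})

/-- The green (tree) part after a diamond-extension at the green edge `xy`: the edges
joining the diamond to `x` and `y` and a path of three diamond edges joining the two
degree-2 vertices of the diamond are green; the two remaining (non-incident) diamond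
edges are black. -/
def diamondTree {V : Type*} (T : SimpleGraph V) (x y : V) : SimpleGraph (V ⊕ Fin 4) :=
  SimpleGraph.fromEdgeSet
    (((Sym2.map (Sum.inl : V → V ⊕ Fin 4) '' T.edgeSet) \ {s(Sum.inl x, Sum.inl y)}) ∪
      {s(Sum.inl x, Sum.inr 0), s(Sum.inr 3, Sum.inl y),
       s(Sum.inr 0, Sum.inr 1), s(Sum.inr 1, Sum.inr 2), s(Sum.inr 2, Sum.inr 3)})

/-- `(G, T)` is isomorphic, as a graph with a distinguished (green) subgraph,
to `(G', T')`. -/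
def PairIso {V W : Type*} (G T : SimpleGraph V) (G' T' : SimpleGraph W) : Prop :=
  ∃ e : G ≃g G', ∀ u v : V, T.Adj u v ↔ T'.Adj (e u) (e v)

/-- `(G, T)` is obtained from `(G', T')` by a Tutte-extension (the two subdivided green
edges may be incident or non-incident, but must be distinct). -/
def TutteExtensionOf {V W : Type*} (G' T' : SimpleGraph V) (G T : SimpleGraph W) : Prop :=
  ∃ a b c d : V, T'.Adj a b ∧ T'.Adj c d ∧ s(a, b) ≠ s(c, d) ∧
    PairIso (tutteGraph G' a b c d) (tutteTree T' a b c d) G T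

/-- `(G, T)` is obtained from `(G', T')` by a diamond-extension. -/
def DiamondExtensionOf {V W : Type*} (G' T' : SimpleGraph V) (G T : SimpleGraph W) : Prop :=
  ∃ x y : V, T'.Adj x y ∧ PairIso (diamondGraph G' x y) (diamondTree T' x y) G T

/-- `(G, T)` is obtained from `(G', T')` by a Tutte- or a diamond-extension. -/
def ExtensionOf {V W : Type*} (G' T' : SimpleGraph V) (G T : SimpleGraph W) : Prop :=
  TutteExtensionOf G' T' G T ∨ DiamondExtensionOf G' T' G T

/-- As `PairIso`, additionally preserving a second distinguished subgraph. -/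
def TripleIso {V W : Type*} (G T C : SimpleGraph V) (G' T' C' : SimpleGraph W) : Prop :=
  ∃ e : G ≃g G', (∀ u v : V, T.Adj u v ↔ T'.Adj (e u) (e v)) ∧
    (∀ u v : V, C.Adj u v ↔ C'.Adj (e u) (e v))

/-- `(G, T, C)` is obtained from `(G', T', C')` by a Tutte- or diamond-extension; the
2-regular part `C` is untouched by the extension. -/
def ExtensionOfWithC {V W : Type*} (G' T' C' : SimpleGraph V) (G T C : SimpleGraph W) : Prop :=
  (∃ a b c d : V, T'.Adj a b ∧ T'.Adj c d ∧ s(a, b) ≠ s(c, d) ∧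
     TripleIso (tutteGraph G' a b c d) (tutteTree T' a b c d)
       (SimpleGraph.map (Function.Embedding.inl : V ↪ V ⊕ Fin 2) C') G T C) ∨
  (∃ x y : V, T'.Adj x y ∧
     TripleIso (diamondGraph G' x y) (diamondTree T' x y)
       (SimpleGraph.map (Function.Embedding.inl : V ↪ V ⊕ Fin 4) C') G T C)

/-- A graph together with a 3-decomposition `(T, C, M)`. -/
def DecompState : Type 1 :=
  Σ V : Type, SimpleGraph V × SimpleGraph V × SimpleGraph V × SimpleGraph V

/-- `ReduceStep s t` holds if the decomposed graph `t` is obtained from `s` by a single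
Tutte- or diamond-reduction, i.e. `s` is obtained from the 3-decomposed cubic graph `t`
by a Tutte- or diamond-extension. -/
def ReduceStep (s t : DecompState) : Prop :=
  IsCubic t.2.1 ∧ IsThreeDecomposition t.2.1 t.2.2.1 t.2.2.2.1 t.2.2.2.2 ∧
  ExtensionOfWithC t.2.1 t.2.2.1 t.2.2.2.1 s.2.1 s.2.2.1 s.2.2.2.1

/-- A graph together with a distinguished (green) spanning tree. -/
def PairState : Type 1 := Σ V : Type, SimpleGraph V × SimpleGraph V

/-- One Tutte- or diamond-extension step on graphs with a green spanning tree. -/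
def ExtendStep (s t : PairState) : Prop := ExtensionOf s.2.1 s.2.2 t.2.1 t.2.2

/-! ### Tree-width and path-width -/

/-- `G` has a tree-decomposition of width at most `w`. -/
def HasTreewidthAtMost {V : Type*} (G : SimpleGraph V) (w : ℕ) : Prop :=
  ∃ (ι : Type) (t : SimpleGraph ι) (bag : ι → Set V),
    t.IsTree ∧
    (∀ v : V, ∃ i, v ∈ bag i) ∧
    (∀ u v : V, G.Adj u v → ∃ i, u ∈ bag i ∧ v ∈ bag i) ∧
    (∀ v : V, (SimpleGraph.induce {i : ι | v ∈ bag i} t).Connected) ∧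
    (∀ i : ι, (bag i).ncard ≤ w + 1)

/-- `G` has a path-decomposition of width at most `w`. -/
def HasPathwidthAtMost {V : Type*} (G : SimpleGraph V) (w : ℕ) : Prop :=
  ∃ (n : ℕ) (bag : Fin n → Set V),
    (∀ v : V, ∃ i, v ∈ bag i) ∧
    (∀ u v : V, G.Adj u v → ∃ i, u ∈ bag i ∧ v ∈ bag i) ∧
    (∀ (v : V) (i j k : Fin n), i ≤ j → j ≤ k → v ∈ bag i → v ∈ bag k → v ∈ bag j) ∧
    (∀ i, (bag i).ncard ≤ w + 1)

/-- The path on six vertices. -/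
def pathSix : SimpleGraph (Fin 6) :=
  SimpleGraph.fromRel fun i j => j.val = i.val + 1

/-- The edges of `G` outside of the spanning tree `T` decompose into a disjoint union of
cycles (a 2-regular graph) and a matching. -/
def ComplementDecomposes {V : Type*} (G T : SimpleGraph V) : Prop :=
  ∃ C M : SimpleGraph V,
    C.edgeSet ∪ M.edgeSet = G.edgeSet \ T.edgeSet ∧
    Disjoint C.edgeSet M.edgeSet ∧
    (∀ a : V, (C.neighborSet a).ncard = 0 ∨ (C.neighborSet a).ncard = 2) ∧
    (∀ a : V, (M.neighborSet a).ncard ≤ 1)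

lemma sym2_exists {V : Type*} (x : Sym2 V) : ∃ u v, x = s(u,v) := by
  induction x using Sym2.ind with | _ u v => exact ⟨u,v,rfl⟩

lemma mem_range_of_mem_map {V W : Type*} {f : V → W} {S : Set (Sym2 V)} {e : Sym2 W}
    (he : e ∈ Sym2.map f '' S) {w : W} (hw : w ∈ e) : w ∈ Set.range f := by
  obtain ⟨e', -, rfl⟩ := he
  obtain ⟨u, -, rfl⟩ := Sym2.mem_map.mp hw
  exact ⟨u, rfl⟩

lemma edgeSet_map' {V W : Type*} (f : V ↪ W) (G : SimpleGraph V) :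
    (G.map f).edgeSet = Sym2.map f '' G.edgeSet := by
  ext e
  obtain ⟨u, v, rfl⟩ := sym2_exists e
  simp only [mem_edgeSet, map_adj, Set.mem_image]
  constructor
  · rintro ⟨u', v', hadj, rfl, rfl⟩
    exact ⟨s(u', v'), hadj, rfl⟩
  · rintro ⟨e', he', hmap⟩
    obtain ⟨x, y, rfl⟩ := sym2_exists e'
    rw [Sym2.map_pair_eq, Sym2.eq_iff] at hmap
    rcases hmap with ⟨rfl, rfl⟩ | ⟨rfl, rfl⟩
    · exact ⟨x, y, (mem_edgeSet _).mp he', rfl, rfl⟩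
    · exact ⟨y, x, ((mem_edgeSet _).mp he').symm, rfl, rfl⟩

lemma CD_transfer {V W : Type*} [Finite V] [Finite W] (f : V ↪ W)
    (G₁ T₁ : SimpleGraph V) (G₂ T₂ : SimpleGraph W) (N : Set (Sym2 W))
    (h : G₂.edgeSet \ T₂.edgeSet = Sym2.map f '' (G₁.edgeSet \ T₁.edgeSet) ∪ N)
    (hN1 : ∀ e ∈ N, ∀ w ∈ e, w ∉ Set.range f)
    (hN2 : ∀ (w : W) (e₁ e₂ : Sym2 W), e₁ ∈ N → e₂ ∈ N → w ∈ e₁ → w ∈ e₂ → e₁ = e₂)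
    (hN3 : ∀ e ∈ N, ¬ e.IsDiag) :
    ComplementDecomposes G₂ T₂ ↔ ComplementDecomposes G₁ T₁ := by
  have hf := f.injective
  have hsym2 : Function.Injective (Sym2.map f) := Sym2.map.injective hf
  constructor
  · rintro ⟨C, M, hun, hdis, hC, hM⟩
    have hCsub : C.edgeSet ⊆ Sym2.map f '' (G₁.edgeSet \ T₁.edgeSet) := by
      intro x hx
      have hx2 : x ∈ G₂.edgeSet \ T₂.edgeSet := by rw [← hun]; exact Or.inl hx
      rw [h] at hx2
      rcases hx2 with hx2 | hx2
      · exact hx2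
      · exfalso
        obtain ⟨u, v, rfl⟩ := sym2_exists x
        have hu : u ∉ Set.range f := hN1 _ hx2 u (Sym2.mem_mk_left u v)
        have hsub : C.neighborSet u ⊆ {v} := by
          intro z hz
          have hz2 : s(u, z) ∈ C.edgeSet := hz
          have hz3 : s(u, z) ∈ G₂.edgeSet \ T₂.edgeSet := by rw [← hun]; exact Or.inl hz2
          rw [h] at hz3
          rcases hz3 with hz3 | hz3
          · exact absurd (mem_range_of_mem_map hz3 (Sym2.mem_mk_left u z)) hu
          · have heq := hN2 u _ _ hz3 hx2 (Sym2.mem_mk_left u z) (Sym2.mem_mk_left u v)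
            rw [Sym2.eq_iff] at heq
            rcases heq with ⟨-, rfl⟩ | ⟨rfl, rfl⟩
            · rfl
            · exact absurd (hN3 _ hx2) (by simp)
        have h1 : (C.neighborSet u).ncard ≤ 1 := by
          calc (C.neighborSet u).ncard ≤ ({v} : Set W).ncard :=
                Set.ncard_le_ncard hsub (Set.toFinite _)
            _ = 1 := Set.ncard_singleton v
        have h0 : (C.neighborSet u).ncard = 0 := by rcases hC u with h' | h' <;> omega
        have he : C.neighborSet u = ∅ := (Set.ncard_eq_zero (Set.toFinite _)).mp h0
        have hv : v ∈ C.neighborSet u := (mem_edgeSet _).mp hx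
        rw [he] at hv
        exact hv
    have hCrange : ∀ x ∈ C.edgeSet, ∀ w ∈ x, w ∈ Set.range f :=
      fun x hx w hw => mem_range_of_mem_map (hCsub hx) hw
    refine ⟨C.comap f, M.comap f, ?_, ?_, ?_, ?_⟩
    · ext e
      obtain ⟨u, v, rfl⟩ := sym2_exists e
      simp only [Set.mem_union, mem_edgeSet, comap_adj]
      constructor
      · intro hx
        have hmem : s(f u, f v) ∈ C.edgeSet ∪ M.edgeSet := by
          rcases hx with hx | hx
          · exact Or.inl hx
          · exact Or.inr hx
        rw [hun, h] at hmem
        rcases hmem with hmem | hmem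
        · obtain ⟨e', he', hmap⟩ := hmem
          have : e' = s(u, v) := hsym2 (by rw [hmap, Sym2.map_pair_eq])
          rwa [this] at he'
        · exact absurd ⟨u, rfl⟩ (hN1 _ hmem (f u) (Sym2.mem_mk_left _ _))
      · intro hx
        have : s(f u, f v) ∈ G₂.edgeSet \ T₂.edgeSet := by
          rw [h]; exact Or.inl ⟨s(u, v), hx, Sym2.map_pair_eq f u v⟩
        rw [← hun] at this
        rcases this with h' | h'
        · exact Or.inl ((mem_edgeSet _).mp h')
        · exact Or.inr ((mem_edgeSet _).mp h')
    · rw [Set.disjoint_left]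
      intro e h1 h2
      obtain ⟨u, v, rfl⟩ := sym2_exists e
      exact Set.disjoint_left.mp hdis ((mem_edgeSet _).mpr h1) ((mem_edgeSet _).mpr h2)
    · intro u
      have hnb : C.neighborSet (f u) = f '' ((C.comap f).neighborSet u) := by
        ext x
        simp only [mem_neighborSet, Set.mem_image, comap_adj]
        constructor
        · intro hx
          obtain ⟨v, rfl⟩ := hCrange _ ((mem_edgeSet _).mpr hx) x (Sym2.mem_mk_right _ _)
          exact ⟨v, hx, rfl⟩
        · rintro ⟨v, hv, rfl⟩
          exact hv
      have := hC (f u)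
      rwa [hnb, Set.ncard_image_of_injective _ hf] at this
    · intro u
      have hsub : f '' ((M.comap f).neighborSet u) ⊆ M.neighborSet (f u) := by
        rintro x ⟨v, hv, rfl⟩
        exact hv
      calc ((M.comap f).neighborSet u).ncard
          = (f '' ((M.comap f).neighborSet u)).ncard :=
            (Set.ncard_image_of_injective _ hf).symm
        _ ≤ (M.neighborSet (f u)).ncard := Set.ncard_le_ncard hsub (Set.toFinite _)
        _ ≤ 1 := hM (f u)
  · rintro ⟨C, M, hun, hdis, hC, hM⟩
    have hNdiag : N \ {e : Sym2 W | e.IsDiag} = N := by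
      ext e
      simp only [Set.mem_diff, Set.mem_setOf_eq]
      exact ⟨fun h' => h'.1, fun hx => ⟨hx, hN3 e hx⟩⟩
    have hMedge : (M.map f ⊔ fromEdgeSet N).edgeSet = Sym2.map f '' M.edgeSet ∪ N := by
      rw [edgeSet_sup, edgeSet_map', edgeSet_fromEdgeSet]
      exact congrArg _ hNdiag
    refine ⟨C.map f, M.map f ⊔ fromEdgeSet N, ?_, ?_, ?_, ?_⟩
    · rw [hMedge, edgeSet_map', ← Set.union_assoc, ← Set.image_union, hun, h]
    · rw [hMedge, edgeSet_map', Set.disjoint_union_right]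
      constructor
      · rw [Set.disjoint_left]
        intro e h1 h2
        obtain ⟨e₁, he₁, rfl⟩ := h1
        obtain ⟨e₂, he₂, heq⟩ := h2
        rw [hsym2 heq] at he₂
        exact Set.disjoint_left.mp hdis he₁ he₂
      · rw [Set.disjoint_left]
        intro e h1 h2
        obtain ⟨u, v, rfl⟩ := sym2_exists e
        exact hN1 _ h2 u (Sym2.mem_mk_left _ _) (mem_range_of_mem_map h1 (Sym2.mem_mk_left _ _))
    · intro w
      by_cases hw : w ∈ Set.range f
      · obtain ⟨u, rfl⟩ := hw
        have hnb : (C.map f).neighborSet (f u) = f '' C.neighborSet u := by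
          ext x
          simp only [mem_neighborSet, map_adj, Set.mem_image]
          constructor
          · rintro ⟨u', v', hadj, hu, rfl⟩
            rw [hf hu] at hadj
            exact ⟨v', hadj, rfl⟩
          · rintro ⟨v, hv, rfl⟩
            exact ⟨u, v, hv, rfl, rfl⟩
        rw [hnb, Set.ncard_image_of_injective _ hf]
        exact hC u
      · left
        have : (C.map f).neighborSet w = ∅ := by
          ext x
          simp only [mem_neighborSet, map_adj, Set.mem_empty_iff_false, iff_false, not_exists]
          rintro u' v' ⟨hadj, hu, hx⟩
          exact hw ⟨u', hu⟩
        rw [this, Set.ncard_empty]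
    · intro w
      have hnb : (M.map f ⊔ fromEdgeSet N).neighborSet w
          = (M.map f).neighborSet w ∪ (fromEdgeSet N).neighborSet w := by
        ext x; simp [mem_neighborSet, sup_adj]
      by_cases hw : w ∈ Set.range f
      · obtain ⟨u, rfl⟩ := hw
        have hN0 : (fromEdgeSet N).neighborSet (f u) = ∅ := by
          ext x
          simp only [mem_neighborSet, fromEdgeSet_adj, Set.mem_empty_iff_false, iff_false,
            not_and]
          intro hmem
          exact fun _ => hN1 _ hmem (f u) (Sym2.mem_mk_left _ _) ⟨u, rfl⟩
        have hnb2 : (M.map f).neighborSet (f u) = f '' M.neighborSet u := by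
          ext x
          simp only [mem_neighborSet, map_adj, Set.mem_image]
          constructor
          · rintro ⟨u', v', hadj, hu, rfl⟩
            rw [hf hu] at hadj
            exact ⟨v', hadj, rfl⟩
          · rintro ⟨v, hv, rfl⟩
            exact ⟨u, v, hv, rfl, rfl⟩
        rw [hnb, hN0, Set.union_empty, hnb2, Set.ncard_image_of_injective _ hf]
        exact hM u
      · have hmap0 : (M.map f).neighborSet w = ∅ := by
          ext x
          simp only [mem_neighborSet, map_adj, Set.mem_empty_iff_false, iff_false, not_exists]
          rintro u' v' ⟨hadj, hu, hx⟩
          exact hw ⟨u', hu⟩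
        rw [hnb, hmap0, Set.empty_union]
        apply (Set.ncard_le_one_iff (Set.toFinite _)).mpr
        intro x y hx hy
        have hx' : s(w, x) ∈ N := ((fromEdgeSet_adj _).mp hx).1
        have hy' : s(w, y) ∈ N := ((fromEdgeSet_adj _).mp hy).1
        have heq := hN2 w _ _ hx' hy' (Sym2.mem_mk_left _ _) (Sym2.mem_mk_left _ _)
        rw [Sym2.eq_iff] at heq
        rcases heq with ⟨-, hxy⟩ | ⟨hwy, hxw⟩
        · exact hxy
        · rw [hxw, hwy]

lemma diff_helper {α : Type*} {A B D S E : Set α} (hBA : B ⊆ A) (hDB : D ⊆ B)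
    (hSA : ∀ x ∈ S, x ∉ A) (hEB : ∀ x ∈ E, x ∉ B) (hES : ∀ x ∈ E, x ∉ S) :
    ((A \ D) ∪ S ∪ E) \ ((B \ D) ∪ S) = (A \ B) ∪ E := by
  ext x
  simp only [Set.mem_diff, Set.mem_union, not_or]
  constructor
  · rintro ⟨(⟨hA, hD⟩ | hS) | hE, h2, h3⟩
    · exact Or.inl ⟨hA, fun hB => h2 ⟨hB, hD⟩⟩
    · exact absurd hS h3
    · exact Or.inr hE
  · rintro (⟨hA, hB⟩ | hE)
    · exact ⟨Or.inl (Or.inl ⟨hA, fun hD => hB (hDB hD)⟩), fun h' => hB h'.1, fun hS => hSA x hS hA⟩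
    · exact ⟨Or.inr hE, fun h' => hEB x hE h'.1, hES x hE⟩

lemma nondiag_image {V W : Type*} {f : V → W} (hf : Function.Injective f)
    (G : SimpleGraph V) : ∀ e ∈ Sym2.map f '' G.edgeSet, ¬ e.IsDiag := by
  rintro e ⟨e', he', rfl⟩
  obtain ⟨u, v, rfl⟩ := sym2_exists e'
  rw [Sym2.map_pair_eq, Sym2.mk_isDiag_iff]
  intro h
  exact G.ne_of_adj ((SimpleGraph.mem_edgeSet _).mp he') (hf h)

lemma no_inl_of_mem_image {V W : Type*} (S : Set (Sym2 V)) (e : Sym2 (V ⊕ W))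
    (he : e ∈ Sym2.map (Sum.inl : V → V ⊕ W) '' S) (w : W) : Sum.inr w ∉ e := by
  intro hw
  obtain ⟨u, hu⟩ := mem_range_of_mem_map he hw
  exact Sum.inl_ne_inr hu

lemma sdiff_diag_eq {V : Type*} {s : Set (Sym2 V)} (h : ∀ e ∈ s, ¬ e.IsDiag) :
    s \ {e : Sym2 V | e.IsDiag} = s := by
  ext e
  simp only [Set.mem_diff, Set.mem_setOf_eq]
  exact ⟨fun h' => h'.1, fun hx => ⟨hx, h e hx⟩⟩

lemma tutte_diff {V : Type*} (G' T' : SimpleGraph V) (a b c d : V)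
    (hle : T' ≤ G') (hab : T'.Adj a b) (hcd : T'.Adj c d) :
    (tutteGraph G' a b c d).edgeSet \ (tutteTree T' a b c d).edgeSet =
      Sym2.map (Sum.inl : V → V ⊕ Fin 2) '' (G'.edgeSet \ T'.edgeSet) ∪
        {s(Sum.inr 0, Sum.inr 1)} := by
  classical
  set A := Sym2.map (Sum.inl : V → V ⊕ Fin 2) '' G'.edgeSet with hA
  set B := Sym2.map (Sum.inl : V → V ⊕ Fin 2) '' T'.edgeSet with hB
  set D : Set (Sym2 (V ⊕ Fin 2)) := {s(Sum.inl a, Sum.inl b), s(Sum.inl c, Sum.inl d)} with hD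
  set S : Set (Sym2 (V ⊕ Fin 2)) :=
    {s(Sum.inl a, Sum.inr 0), s(Sum.inr 0, Sum.inl b),
     s(Sum.inl c, Sum.inr 1), s(Sum.inr 1, Sum.inl d)} with hS
  set E : Set (Sym2 (V ⊕ Fin 2)) := {s(Sum.inr 0, Sum.inr 1)} with hE
  have hinj : Function.Injective (Sum.inl : V → V ⊕ Fin 2) := Sum.inl_injective
  have hSdiag : ∀ e ∈ S, ¬ e.IsDiag := by
    intro e he
    rcases he with rfl | rfl | rfl | rfl <;> simp
  have hEdiag : ∀ e ∈ E, ¬ e.IsDiag := by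
    rintro e rfl
    simp
  have hG : (tutteGraph G' a b c d).edgeSet = ((A \ D) ∪ S) ∪ E := by
    rw [tutteGraph, edgeSet_fromEdgeSet]
    have : ((A \ D) ∪
        {s(Sum.inl a, Sum.inr 0), s(Sum.inr 0, Sum.inl b),
         s(Sum.inl c, Sum.inr 1), s(Sum.inr 1, Sum.inl d),
         s(Sum.inr 0, Sum.inr 1)}) = ((A \ D) ∪ S) ∪ E := by
      rw [hS, hE]
      ext x
      simp only [Set.mem_union, Set.mem_insert_iff, Set.mem_singleton_iff]
      tauto
    rw [this]
    apply sdiff_diag_eq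
    rintro e ((⟨hmem, -⟩ | hmem) | hmem)
    · exact nondiag_image hinj G' e hmem
    · exact hSdiag e hmem
    · exact hEdiag e hmem
  have hT : (tutteTree T' a b c d).edgeSet = (B \ D) ∪ S := by
    rw [tutteTree, edgeSet_fromEdgeSet]
    apply sdiff_diag_eq
    rintro e (⟨hmem, -⟩ | hmem)
    · exact nondiag_image hinj T' e hmem
    · exact hSdiag e hmem
  have hBA : B ⊆ A := Set.image_mono (SimpleGraph.edgeSet_mono hle)
  have hDB : D ⊆ B := by
    rintro x (rfl | rfl)
    · exact ⟨s(a, b), hab, by rw [Sym2.map_pair_eq]⟩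
    · exact ⟨s(c, d), hcd, by rw [Sym2.map_pair_eq]⟩
  have hSA : ∀ x ∈ S, x ∉ A := by
    rintro x (rfl | rfl | rfl | rfl) hA'
    · exact no_inl_of_mem_image _ _ hA' 0 (Sym2.mem_mk_right _ _)
    · exact no_inl_of_mem_image _ _ hA' 0 (Sym2.mem_mk_left _ _)
    · exact no_inl_of_mem_image _ _ hA' 1 (Sym2.mem_mk_right _ _)
    · exact no_inl_of_mem_image _ _ hA' 1 (Sym2.mem_mk_left _ _)
  have hEB : ∀ x ∈ E, x ∉ B := by
    rintro x rfl hB'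
    exact no_inl_of_mem_image _ _ hB' 0 (Sym2.mem_mk_left _ _)
  have hES : ∀ x ∈ E, x ∉ S := by
    rintro x rfl hx
    rcases hx with h | h | h | h <;> simp [Sym2.eq_iff] at h
  rw [hG, hT, diff_helper hBA hDB hSA hEB hES, hA, hB,
    ← Set.image_diff (Sym2.map.injective hinj)]


lemma diamond_diff {V : Type*} (G' T' : SimpleGraph V) (x y : V)
    (hle : T' ≤ G') (hxy : T'.Adj x y) :
    (diamondGraph G' x y).edgeSet \ (diamondTree T' x y).edgeSet =
      Sym2.map (Sum.inl : V → V ⊕ Fin 4) '' (G'.edgeSet \ T'.edgeSet) ∪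
        {s(Sum.inr 0, Sum.inr 2), s(Sum.inr 1, Sum.inr 3)} := by
  classical
  set A := Sym2.map (Sum.inl : V → V ⊕ Fin 4) '' G'.edgeSet with hA
  set B := Sym2.map (Sum.inl : V → V ⊕ Fin 4) '' T'.edgeSet with hB
  set D : Set (Sym2 (V ⊕ Fin 4)) := {s(Sum.inl x, Sum.inl y)} with hD
  set S : Set (Sym2 (V ⊕ Fin 4)) :=
    {s(Sum.inl x, Sum.inr 0), s(Sum.inr 3, Sum.inl y),
     s(Sum.inr 0, Sum.inr 1), s(Sum.inr 1, Sum.inr 2), s(Sum.inr 2, Sum.inr 3)} with hS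
  set E : Set (Sym2 (V ⊕ Fin 4)) := {s(Sum.inr 0, Sum.inr 2), s(Sum.inr 1, Sum.inr 3)} with hE
  have hinj : Function.Injective (Sum.inl : V → V ⊕ Fin 4) := Sum.inl_injective
  have hSdiag : ∀ e ∈ S, ¬ e.IsDiag := by
    rintro e (rfl | rfl | rfl | rfl | rfl) <;> simp
  have hEdiag : ∀ e ∈ E, ¬ e.IsDiag := by
    rintro e (rfl | rfl) <;> simp
  have hG : (diamondGraph G' x y).edgeSet = ((A \ D) ∪ S) ∪ E := by
    rw [diamondGraph, edgeSet_fromEdgeSet]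
    have : ((A \ D) ∪
        {s(Sum.inl x, Sum.inr 0), s(Sum.inr 3, Sum.inl y),
         s(Sum.inr 0, Sum.inr 1), s(Sum.inr 1, Sum.inr 2), s(Sum.inr 2, Sum.inr 3),
         s(Sum.inr 0, Sum.inr 2), s(Sum.inr 1, Sum.inr 3)}) = ((A \ D) ∪ S) ∪ E := by
      rw [hS, hE]
      ext e
      simp only [Set.mem_union, Set.mem_insert_iff, Set.mem_singleton_iff]
      tauto
    rw [this]
    apply sdiff_diag_eq
    rintro e ((⟨hmem, -⟩ | hmem) | hmem)
    · exact nondiag_image hinj G' e hmem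
    · exact hSdiag e hmem
    · exact hEdiag e hmem
  have hT : (diamondTree T' x y).edgeSet = (B \ D) ∪ S := by
    rw [diamondTree, edgeSet_fromEdgeSet]
    apply sdiff_diag_eq
    rintro e (⟨hmem, -⟩ | hmem)
    · exact nondiag_image hinj T' e hmem
    · exact hSdiag e hmem
  have hBA : B ⊆ A := Set.image_mono (SimpleGraph.edgeSet_mono hle)
  have hDB : D ⊆ B := by
    rintro e rfl
    exact ⟨s(x, y), hxy, by rw [Sym2.map_pair_eq]⟩
  have hSA : ∀ e ∈ S, e ∉ A := by
    rintro e (rfl | rfl | rfl | rfl | rfl) hA'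
    · exact no_inl_of_mem_image _ _ hA' 0 (Sym2.mem_mk_right _ _)
    · exact no_inl_of_mem_image _ _ hA' 3 (Sym2.mem_mk_left _ _)
    · exact no_inl_of_mem_image _ _ hA' 0 (Sym2.mem_mk_left _ _)
    · exact no_inl_of_mem_image _ _ hA' 1 (Sym2.mem_mk_left _ _)
    · exact no_inl_of_mem_image _ _ hA' 2 (Sym2.mem_mk_left _ _)
  have hEB : ∀ e ∈ E, e ∉ B := by
    rintro e (rfl | rfl) hB'
    · exact no_inl_of_mem_image _ _ hB' 0 (Sym2.mem_mk_left _ _)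
    · exact no_inl_of_mem_image _ _ hB' 1 (Sym2.mem_mk_left _ _)
  have hES : ∀ e ∈ E, e ∉ S := by
    rintro e (rfl | rfl) (h | h | h | h | h) <;> simp [Sym2.eq_iff] at h
  rw [hG, hT, diff_helper hBA hDB hSA hEB hES, hA, hB,
    ← Set.image_diff (Sym2.map.injective hinj)]

lemma eq_map_of_iff {V W : Type*} (e : V ≃ W) {T : SimpleGraph V} {T₂ : SimpleGraph W}
    (h : ∀ u v, T.Adj u v ↔ T₂.Adj (e u) (e v)) : T₂ = T.map e.toEmbedding := by
  ext u v
  rw [map_adj]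
  constructor
  · intro huv
    exact ⟨e.symm u, e.symm v, (h _ _).mpr (by simpa using huv), by simp, by simp⟩
  · rintro ⟨u', v', huv, rfl, rfl⟩
    exact (h u' v').mp huv

lemma CD_of_pairIso {V W : Type*} [Finite V] [Finite W] {G₁ T₁ : SimpleGraph V}
    {G₂ T₂ : SimpleGraph W} (h : PairIso G₁ T₁ G₂ T₂) :
    ComplementDecomposes G₂ T₂ ↔ ComplementDecomposes G₁ T₁ := by
  obtain ⟨e, hT⟩ := h
  have hG : G₂ = G₁.map e.toEquiv.toEmbedding :=
    eq_map_of_iff e.toEquiv fun u v => (e.map_adj_iff).symm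
  have hT2 : T₂ = T₁.map e.toEquiv.toEmbedding := eq_map_of_iff e.toEquiv hT
  apply CD_transfer e.toEquiv.toEmbedding G₁ T₁ G₂ T₂ ∅
  · have h1 : G₂.edgeSet = Sym2.map ⇑e.toEquiv.toEmbedding '' G₁.edgeSet := by
      conv_lhs => rw [hG]
      rw [edgeSet_map']
    have h2 : T₂.edgeSet = Sym2.map ⇑e.toEquiv.toEmbedding '' T₁.edgeSet := by
      conv_lhs => rw [hT2]
      rw [edgeSet_map']
    rw [h1, h2, ← Set.image_diff (Sym2.map.injective e.toEquiv.toEmbedding.injective),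
      Set.union_empty]
  · simp
  · simp
  · simp

theorem extension_preserves_three_dec {V W : Type} [Finite V] [Finite W]
    (G' T' : SimpleGraph V) (G T : SimpleGraph W)
    (hle : T' ≤ G') (htree : T'.IsTree)
    (hext : ExtensionOf G' T' G T) :
    ComplementDecomposes G T ↔ ComplementDecomposes G' T' := by
  rcases hext with ⟨a, b, c, d, hab, hcd, -, hiso⟩ | ⟨x, y, hxy, hiso⟩
  · refine (CD_of_pairIso hiso).trans ?_
    apply CD_transfer (Function.Embedding.inl : V ↪ V ⊕ Fin 2) G' T'
      (tutteGraph G' a b c d) (tutteTree T' a b c d) {s(Sum.inr 0, Sum.inr 1)}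
    · exact tutte_diff G' T' a b c d hle hab hcd
    · rintro e rfl w hw ⟨u, hu⟩
      rw [Sym2.mem_iff] at hw
      rcases hw with rfl | rfl <;> exact Sum.inl_ne_inr hu
    · rintro w e₁ e₂ rfl rfl - -
      rfl
    · rintro e rfl
      simp
  · refine (CD_of_pairIso hiso).trans ?_
    apply CD_transfer (Function.Embedding.inl : V ↪ V ⊕ Fin 4) G' T'
      (diamondGraph G' x y) (diamondTree T' x y)
      {s(Sum.inr 0, Sum.inr 2), s(Sum.inr 1, Sum.inr 3)}
    · exact diamond_diff G' T' x y hle hxy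
    · rintro e (rfl | rfl) w hw ⟨u, hu⟩ <;> rw [Sym2.mem_iff] at hw <;>
        rcases hw with rfl | rfl <;> exact Sum.inl_ne_inr hu
    · rintro w e₁ e₂ (rfl | rfl) (rfl | rfl) hw1 hw2
      · rfl
      · rw [Sym2.mem_iff] at hw1 hw2
        rcases hw1 with rfl | rfl <;> rcases hw2 with h | h <;> simp at h
      · rw [Sym2.mem_iff] at hw1 hw2
        rcases hw1 with rfl | rfl <;> rcases hw2 with h | h <;> simp at h
      · rfl
    · rintro e (rfl | rfl) <;> simp
end

section
/- The extension replacing a single vertex by a triangle is 3-compatible: if G is a cubic graph with a 3-decomposition, u is a vertex of G, and H is obtained from G by deleting u, adding a triangle u1u2u3, and joining u1, u2, u3 to the three former neighbours of u (one each), then H has a 3-decomposition. -/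
open SimpleGraph

open Sum (inl inr)

section Toolkit
variable {β : Type*} {B base A : SimpleGraph β}

lemma acyclic_of_hom_inj {γ : Type*} {A : SimpleGraph γ} (f : B →g A)
    (hf : Function.Injective f) (hA : A.IsAcyclic) : B.IsAcyclic := by
  intro v c hc
  exact hA (c.map f) ((SimpleGraph.Walk.map_isCycle_iff_of_injective hf).2 hc)

lemma through_w {w v : β} (c : B.Walk v v) (hc : c.IsCycle) (hw : w ∈ c.support) :
    ∃ (x' y' : β) (r : B.Walk y' x'), B.Adj w x' ∧ B.Adj w y' ∧ x' ≠ y' ∧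
      w ∉ r.support ∧ r.support.Nodup ∧ r.edges.Nodup := by
  classical
  set c0 := c.rotate w hw with hc0
  have hc0c : c0.IsCycle := hc.rotate hw
  obtain ⟨x', h1, p, hp⟩ := (SimpleGraph.Walk.not_nil_iff).1 hc0c.not_nil
  have hlen : 3 ≤ c0.length := hc0c.three_le_length
  have hplen : 2 ≤ p.length := by
    have : c0.length = p.length + 1 := by rw [hp]; simp
    omega
  have hpnil : ¬ p.reverse.Nil := by
    rw [SimpleGraph.Walk.nil_iff_length_eq]
    rw [SimpleGraph.Walk.length_reverse]; omega
  obtain ⟨y', h2, r, hr⟩ := (SimpleGraph.Walk.not_nil_iff).1 hpnil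
  have hadj2 : B.Adj w y' := h2
  -- support facts
  have hsup : c0.support = w :: p.support := by rw [hp]; simp
  have hpn : p.support.Nodup := by
    have := hc0c.support_nodup
    rw [hsup] at this; simpa using this
  have hrevsup : p.support.reverse = w :: r.support := by
    have : p.reverse.support = w :: r.support := by rw [hr]; simp
    simpa using this
  have hwr : w ∉ r.support := by
    have : (w :: r.support).Nodup := by rw [← hrevsup]; exact List.nodup_reverse.2 hpn
    exact (List.nodup_cons.1 this).1
  have hrn : r.support.Nodup := by
    have : (w :: r.support).Nodup := by rw [← hrevsup]; exact List.nodup_reverse.2 hpn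
    exact (List.nodup_cons.1 this).2
  -- edge facts
  have hce : c0.edges = s(w, x') :: p.edges := by rw [hp]; simp
  have hcen : c0.edges.Nodup := hc0c.edges_nodup
  have hfst : s(w, x') ∉ p.edges := by
    rw [hce] at hcen; exact (List.nodup_cons.1 hcen).1
  have hsnd : s(w, y') ∈ p.edges := by
    have : s(w, y') ∈ p.reverse.edges := by rw [hr]; simp
    simpa using this
  have hxy : x' ≠ y' := by
    rintro rfl
    exact hfst hsnd
  have hren : r.edges.Nodup := by
    have : p.reverse.edges.Nodup := by simpa using (List.nodup_cons.1 (hce ▸ hcen)).2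
    rw [hr] at this
    exact (List.nodup_cons.1 this).2
  exact ⟨x', y', r, h1, hadj2, hxy, hwr, hrn, hren⟩

end Toolkit

section Toolkit2
variable {β : Type*} {B base : SimpleGraph β}

lemma transfer_cycle {v : β} (w : β) (c : B.Walk v v) (hc : c.IsCycle) (hw : w ∉ c.support)
    (h3 : ∀ a b, B.Adj a b → a ≠ w → b ≠ w → base.Adj a b) :
    ∃ (v' : β) (c' : base.Walk v' v'), c'.IsCycle := by
  have he : ∀ e ∈ c.edges, e ∈ base.edgeSet := by
    intro e he
    induction e with
    | h a b =>
      have hab : B.Adj a b := c.adj_of_mem_edges he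
      have ha : a ∈ c.support := SimpleGraph.Walk.fst_mem_support_of_mem_edges c he
      have hb : b ∈ c.support := SimpleGraph.Walk.snd_mem_support_of_mem_edges c he
      exact (h3 a b hab (fun h => hw (h ▸ ha)) (fun h => hw (h ▸ hb)))
  exact ⟨v, c.transfer base he, hc.transfer he⟩

/-- Remove a leaf `w` (unique neighbour): acyclicity transfers back. -/
lemma acyclic_leaf {w x : β} (h1 : ∀ z, B.Adj w z → z = x)
    (h3 : ∀ a b, B.Adj a b → a ≠ w → b ≠ w → base.Adj a b)
    (hbase : base.IsAcyclic) : B.IsAcyclic := by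
  intro v c hc
  by_cases hw : w ∈ c.support
  · obtain ⟨x', y', r, ha1, ha2, hxy, -, -, -⟩ := through_w c hc hw
    exact hxy ((h1 x' ha1).trans (h1 y' ha2).symm)
  · obtain ⟨v', c', hc'⟩ := transfer_cycle w c hc hw h3
    exact hbase c' hc'

/-- Suppress a degree-2 vertex `w` with neighbours `x ≠ y`, `x`,`y` non-adjacent;
acyclicity of the suppressed graph (which has the edge `xy` instead) transfers back. -/
lemma acyclic_suppress {w x y : β} (h1 : ∀ z, B.Adj w z → z = x ∨ z = y)
    (hnadj : ¬ B.Adj x y)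
    (h3 : ∀ a b, B.Adj a b → a ≠ w → b ≠ w → base.Adj a b)
    (hxy : base.Adj x y)
    (hbase : base.IsAcyclic) : B.IsAcyclic := by
  intro v c hc
  by_cases hw : w ∈ c.support
  · obtain ⟨x', y', r, ha1, ha2, hxy', hwr, hrn, hren⟩ := through_w c hc hw
    -- x', y' are x and y in some order
    have hadjxy : base.Adj x' y' := by
      rcases h1 x' ha1 with rfl | rfl <;> rcases h1 y' ha2 with rfl | rfl
      · exact absurd rfl hxy'
      · exact hxy
      · exact hxy.symm
      · exact absurd rfl hxy'
    have he : ∀ e ∈ r.edges, e ∈ base.edgeSet := by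
      intro e he
      induction e with
      | h a b =>
        have hab : B.Adj a b := r.adj_of_mem_edges he
        have ha : a ∈ r.support := SimpleGraph.Walk.fst_mem_support_of_mem_edges r he
        have hb : b ∈ r.support := SimpleGraph.Walk.snd_mem_support_of_mem_edges r he
        exact (h3 a b hab (fun h => hwr (h ▸ ha)) (fun h => hwr (h ▸ hb)))
    have hBxy : ¬ B.Adj x' y' := by
      rcases h1 x' ha1 with rfl | rfl <;> rcases h1 y' ha2 with rfl | rfl
      · exact absurd rfl hxy'
      · exact hnadj
      · exact fun h => hnadj h.symm
      · exact absurd rfl hxy'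
    refine hbase (SimpleGraph.Walk.cons hadjxy (r.transfer base he)) ?_
    constructor
    · constructor
      · constructor
        rw [SimpleGraph.Walk.edges_cons, SimpleGraph.Walk.edges_transfer]
        refine List.nodup_cons.2 ⟨fun hmem => ?_, hren⟩
        exact hBxy (r.adj_of_mem_edges hmem)
      · simp
    · rw [SimpleGraph.Walk.support_cons, SimpleGraph.Walk.support_transfer]
      simpa using hrn
  · obtain ⟨v', c', hc'⟩ := transfer_cycle w c hc hw h3
    exact hbase c' hc'

end Toolkit2

section Toolkit3
variable {α γ : Type*} {A : SimpleGraph (α ⊕ γ)} {G : SimpleGraph α}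

lemma acyclic_lift (hr : ∀ (x : α ⊕ γ) (j : γ), ¬ A.Adj x (Sum.inr j))
    (hll : ∀ a b, A.Adj (Sum.inl a) (Sum.inl b) → G.Adj a b)
    (hG : G.IsAcyclic) : A.IsAcyclic := by
  have proj : ∀ {x y : α ⊕ γ} (p : A.Walk x y) (a b : α), x = Sum.inl a → y = Sum.inl b →
      ∃ q : G.Walk a b, p.edges = q.edges.map (Sym2.map Sum.inl) ∧
        p.support = q.support.map Sum.inl := by
    intro x y p
    induction p with
    | nil =>
      rintro a b rfl hb
      cases Sum.inl_injective hb
      exact ⟨SimpleGraph.Walk.nil, by simp, by simp⟩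
    | @cons u v w h p ih =>
      rintro a b rfl rfl
      match v, h with
      | Sum.inr j, h => exact absurd h (hr _ j)
      | Sum.inl c, h =>
        obtain ⟨q, hq1, hq2⟩ := ih c b rfl rfl
        exact ⟨SimpleGraph.Walk.cons (hll _ _ h) q, by simp [hq1], by simp [hq2]⟩
  intro v c hc
  match v with
  | Sum.inr j =>
    obtain ⟨x', h1, p, hp⟩ := (SimpleGraph.Walk.not_nil_iff).1 hc.not_nil
    exact hr _ j h1.symm
  | Sum.inl a =>
    obtain ⟨q, hq1, hq2⟩ := proj c a a rfl rfl
    refine hG q ⟨⟨⟨?_⟩, ?_⟩, ?_⟩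
    · exact List.Nodup.of_map _ (hq1 ▸ hc.edges_nodup)
    · intro hq
      have h4 : (3:ℕ) ≤ c.length := hc.three_le_length
      have hl1 : c.edges.length = c.length := SimpleGraph.Walk.length_edges c
      have hl2 : q.edges.length = q.length := SimpleGraph.Walk.length_edges q
      have h3 : c.length = q.length := by rw [← hl1, ← hl2, hq1, List.length_map]
      have h5 : q.length = 0 := by rw [hq]; rfl
      omega
    · have : c.support.tail = q.support.tail.map Sum.inl := by
        rw [hq2]; exact (List.map_tail (f := Sum.inl) (l := q.support)).symm
      exact List.Nodup.of_map _ (this ▸ hc.support_nodup)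
end Toolkit3

section Transfer
variable {V : Type*}

lemma union3_iff {T C M G : SimpleGraph V} :
    T.edgeSet ∪ C.edgeSet ∪ M.edgeSet = G.edgeSet ↔
      ∀ a b, T.Adj a b ∨ C.Adj a b ∨ M.Adj a b ↔ G.Adj a b := by
  constructor
  · intro h a b
    have := Set.ext_iff.1 h s(a, b)
    simpa [or_assoc] using this
  · intro h
    ext e
    induction e with
    | h a b => simpa [or_assoc] using h a b

lemma disj_iff {A B : SimpleGraph V} :
    Disjoint A.edgeSet B.edgeSet ↔ ∀ a b, A.Adj a b → ¬ B.Adj a b := by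
  rw [Set.disjoint_left]
  constructor
  · intro h a b ha hb
    exact h ((SimpleGraph.mem_edgeSet A).mpr ha) ((SimpleGraph.mem_edgeSet B).mpr hb)
  · intro h e
    induction e with
    | h a b =>
      intro h1 h2
      exact h a b ((SimpleGraph.mem_edgeSet A).mp h1) ((SimpleGraph.mem_edgeSet B).mp h2)

lemma isTree_of_iso {W : Type*} {B : SimpleGraph V} {A : SimpleGraph W} (e : B ≃g A)
    (hA : A.IsTree) : B.IsTree := by
  constructor
  · exact e.connected_iff.2 hA.isConnected
  · exact acyclic_of_hom_inj e.toHom e.toEquiv.injective hA.IsAcyclic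

lemma ncard_nbhd_comap {W : Type*} (e : V ≃ W) (T : SimpleGraph W) (a : V) :
    ((T.comap e).neighborSet a).ncard = (T.neighborSet (e a)).ncard := by
  have h : (T.comap e).neighborSet a = e.symm '' (T.neighborSet (e a)) := by
    ext b
    simp only [SimpleGraph.mem_neighborSet, SimpleGraph.comap_adj, Set.mem_image]
    constructor
    · intro h; exact ⟨e b, h, by simp⟩
    · rintro ⟨c, hc, rfl⟩; simpa using hc
  rw [h, Set.ncard_image_of_injective _ e.symm.injective]

lemma hasThreeDecomposition_of_iso {W W' : Type*} {H : SimpleGraph W} {K : SimpleGraph W'}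
    (e : H ≃g K) (h : HasThreeDecomposition K) : HasThreeDecomposition H := by
  obtain ⟨T, C, M, h1, h2, h3, h4, h5, h6, h7⟩ := h
  refine ⟨T.comap e.toEquiv, C.comap e.toEquiv, M.comap e.toEquiv, ?_, ?_, ?_, ?_, ?_, ?_, ?_⟩
  · rw [union3_iff] at h1 ⊢
    intro a b
    have h0 := h1 (e a) (e b)
    have he : K.Adj (e a) (e b) ↔ H.Adj a b := e.map_adj_iff
    simpa [SimpleGraph.comap_adj] using (h0.trans he)
  · rw [disj_iff] at h2 ⊢; exact fun a b ha hb => h2 _ _ ha hb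
  · rw [disj_iff] at h3 ⊢; exact fun a b ha hb => h3 _ _ ha hb
  · rw [disj_iff] at h4 ⊢; exact fun a b ha hb => h4 _ _ ha hb
  · exact isTree_of_iso (SimpleGraph.Iso.comap e.toEquiv T) h5
  · intro a; rw [ncard_nbhd_comap]; exact h6 (e a)
  · intro a; rw [ncard_nbhd_comap]; exact h7 (e a)

end Transfer

section Setup
variable {V : Type*} {G T C M : SimpleGraph V} (φ : Fin 1 ↪ V)
  (ψ : Fin 3 → {a : V // a ∉ Set.range φ})

lemma mem_range_phi (v : V) : v ∈ Set.range φ ↔ v = φ 0 := by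
  constructor
  · rintro ⟨x, rfl⟩; rw [Subsingleton.elim x 0]
  · rintro rfl; exact ⟨0, rfl⟩

lemma val_ne_u (a : {a : V // a ∉ Set.range φ}) : a.1 ≠ φ 0 := by
  intro h
  exact a.2 ((mem_range_phi φ a.1).2 h)

lemma starT_adj (i : Fin 1) (o : Fin 3) : (starT (Fin 3)).Adj (Sum.inl i) (Sum.inr o) := by
  rw [starT, SimpleGraph.fromRel_adj]
  exact ⟨by simp, Or.inl trivial⟩

lemma triangleT_adj_io (i o : Fin 3) :
    triangleT.Adj (Sum.inl i) (Sum.inr o) ↔ i = o := by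
  rw [triangleT, SimpleGraph.fromRel_adj]
  constructor
  · rintro ⟨-, h | h⟩
    · exact h
    · exact h.elim
  · rintro rfl; exact ⟨by simp, Or.inl rfl⟩

lemma triangleT_adj_ii (i k : Fin 3) :
    triangleT.Adj (Sum.inl i) (Sum.inl k) ↔ i ≠ k := by
  rw [triangleT, SimpleGraph.fromRel_adj]
  constructor
  · rintro ⟨-, h | h⟩
    · exact h
    · exact h.symm
  · intro h
    exact ⟨by simpa using h, Or.inl h⟩

variable {φ ψ}

lemma core_adj (hcore : IsCoreEmbedding (starT (Fin 3)) G φ ψ) (a : {a : V // a ∉ Set.range φ}) :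
    G.Adj (φ 0) a.1 ↔ ∃ o : Fin 3, ψ o = a := by
  rw [hcore.2.1 0 a]
  constructor
  · rintro ⟨o, -, h⟩; exact ⟨o, h⟩
  · rintro ⟨o, h⟩; exact ⟨o, starT_adj 0 o, h⟩

lemma psi_inj (hcore : IsCoreEmbedding (starT (Fin 3)) G φ ψ) : Function.Injective ψ := by
  intro o o' h
  exact hcore.2.2 0 (starT_adj 0 o) (starT_adj 0 o') h

lemma kadj_ll (a b : {a : V // a ∉ Set.range φ}) :
    (transform triangleT G φ ψ).Adj (Sum.inl a) (Sum.inl b) ↔ G.Adj a.1 b.1 := by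
  rw [transform, SimpleGraph.fromRel_adj]
  constructor
  · rintro ⟨-, h | h⟩
    · exact h
    · exact h.symm
  · intro h
    refine ⟨fun hab => ?_, Or.inl h⟩
    rw [Sum.inl.injEq] at hab
    exact G.irrefl (hab ▸ h)

lemma kadj_rl (j : Fin 3) (a : {a : V // a ∉ Set.range φ}) :
    (transform triangleT G φ ψ).Adj (Sum.inr j) (Sum.inl a) ↔ ψ j = a := by
  rw [transform, SimpleGraph.fromRel_adj]
  constructor
  · rintro ⟨-, h | h⟩
    · obtain ⟨o, ho, ho'⟩ := h
      rw [triangleT_adj_io] at ho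
      exact ho ▸ ho'
    · exact h.elim
  · intro h
    exact ⟨by simp, Or.inl ⟨j, (triangleT_adj_io j j).2 rfl, h⟩⟩

lemma kadj_rr (j k : Fin 3) :
    (transform triangleT G φ ψ).Adj (Sum.inr j) (Sum.inr k) ↔ j ≠ k := by
  rw [transform, SimpleGraph.fromRel_adj]
  constructor
  · rintro ⟨h, -⟩
    simpa using h
  · intro h
    refine ⟨by simpa using h, Or.inl ?_⟩
    show triangleT.Adj (Sum.inl j) (Sum.inl k)
    exact (triangleT_adj_ii j k).2 h

lemma kadj_lr (a : {a : V // a ∉ Set.range φ}) (j : Fin 3) :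
    (transform triangleT G φ ψ).Adj (Sum.inl a) (Sum.inr j) ↔ ψ j = a :=
  ⟨fun h => (kadj_rl j a).1 h.symm, fun h => ((kadj_rl j a).2 h).symm⟩

end Setup

section Perm
variable {V : Type*} {G : SimpleGraph V} {φ : Fin 1 ↪ V}
  {ψ : Fin 3 → {a : V // a ∉ Set.range φ}}

lemma perm_core (σ : Equiv.Perm (Fin 3)) (h : IsCoreEmbedding (starT (Fin 3)) G φ ψ) :
    IsCoreEmbedding (starT (Fin 3)) G φ (ψ ∘ σ) := by
  refine ⟨h.1, ?_, ?_⟩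
  · intro i a
    rw [Subsingleton.elim i 0, core_adj h a]
    constructor
    · rintro ⟨o, rfl⟩
      exact ⟨σ.symm o, starT_adj 0 _, by simp⟩
    · rintro ⟨o, -, rfl⟩
      exact ⟨σ o, rfl⟩
  · intro i
    intro o _ o' _ hh
    exact σ.injective (psi_inj h hh)

lemma perm_iso (σ : Equiv.Perm (Fin 3)) :
    Nonempty ((transform triangleT G φ ψ) ≃g (transform triangleT G φ (ψ ∘ σ))) := by
  refine ⟨⟨Equiv.sumCongr (Equiv.refl _) σ.symm, ?_⟩⟩
  intro x y
  match x, y with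
  | Sum.inl a, Sum.inl b => simp [kadj_ll]
  | Sum.inl a, Sum.inr j => simp [kadj_lr]
  | Sum.inr j, Sum.inl a => simp [kadj_rl]
  | Sum.inr j, Sum.inr k =>
    simp only [Equiv.sumCongr_apply, Sum.map_inr, kadj_rr]
    exact ⟨fun hh h => hh (by rw [h]), fun hh h => hh (σ.symm.injective h)⟩
end Perm

section Helpers
variable {V : Type*} [Finite V] {T : SimpleGraph V} (φ : Fin 1 ↪ V)

lemma ncard_image_sum (s : Set {a : V // a ∉ Set.range φ}) (t : Set (Fin 3)) :
    ((Sum.inl '' s) ∪ (Sum.inr '' t) : Set ({a : V // a ∉ Set.range φ} ⊕ Fin 3)).ncard =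
      s.ncard + t.ncard := by
  rw [Set.ncard_union_eq ?_ (Set.toFinite _) (Set.toFinite _),
    Set.ncard_image_of_injective _ Sum.inl_injective,
    Set.ncard_image_of_injective _ Sum.inr_injective]
  rw [Set.disjoint_left]
  rintro x ⟨a, -, rfl⟩ ⟨b, -, h⟩
  exact Sum.inl_ne_inr h.symm

lemma ncard_val_preimage (s : Set V) :
    ((Subtype.val ⁻¹' s) : Set {a : V // a ∉ Set.range φ}).ncard = (s \ {φ 0}).ncard := by
  rw [← Set.ncard_image_of_injective _ (Subtype.val_injective)]
  congr 1
  ext v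
  simp only [Set.mem_image, Set.mem_preimage, Subtype.exists, exists_and_right,
    exists_eq_right, Set.mem_diff, Set.mem_singleton_iff]
  constructor
  · rintro ⟨hv, hvs⟩
    exact ⟨hvs, fun h => hv ((mem_range_phi φ v).2 h)⟩
  · rintro ⟨hvs, hv⟩
    exact ⟨fun h => hv ((mem_range_phi φ v).1 h), hvs⟩

lemma reach_all {B : SimpleGraph ({a : V // a ∉ Set.range φ} ⊕ Fin 3)}
    (hT : T.Connected) (x0 : {a : V // a ∉ Set.range φ} ⊕ Fin 3)
    (hlift : ∀ a c : {a : V // a ∉ Set.range φ}, T.Adj a.1 c.1 → B.Adj (Sum.inl a) (Sum.inl c))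
    (hstep : ∀ a : {a : V // a ∉ Set.range φ}, T.Adj a.1 (φ 0) → B.Reachable (Sum.inl a) x0) :
    ∀ a : {a : V // a ∉ Set.range φ}, B.Reachable (Sum.inl a) x0 := by
  have key : ∀ (v z : V) (w : T.Walk v z) (hz : z = φ 0) (hv : v ∉ Set.range φ),
      B.Reachable (Sum.inl ⟨v, hv⟩) x0 := by
    intro v z w
    induction w with
    | nil => rintro rfl hv; exact absurd ((mem_range_phi φ _).2 rfl) hv
    | @cons v c _ h p ih =>
      rintro rfl hv
      by_cases hc : c ∈ Set.range φ
      · rw [mem_range_phi] at hc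
        exact hstep ⟨v, hv⟩ (hc ▸ h)
      · exact ((hlift ⟨v, hv⟩ ⟨c, hc⟩ h).reachable).trans (ih rfl hc)
  intro a
  exact key a.1 (φ 0) (hT.preconnected a.1 (φ 0)).some rfl a.2
end Helpers

section Mk
variable {V : Type*} {φ : Fin 1 ↪ V}

/-- Constructor for subgraphs of the transformed graph. -/
def mkG (φ : Fin 1 ↪ V) (A : SimpleGraph V) (P : Fin 3 → {a : V // a ∉ Set.range φ} → Prop)
    (Q : Fin 3 → Fin 3 → Prop) : SimpleGraph ({a : V // a ∉ Set.range φ} ⊕ Fin 3) :=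
  SimpleGraph.fromRel fun x y =>
    match x, y with
    | Sum.inl a, Sum.inl b => A.Adj a.1 b.1
    | Sum.inr j, Sum.inl a => P j a
    | Sum.inr j, Sum.inr k => Q j k
    | Sum.inl _, Sum.inr _ => False

variable {A : SimpleGraph V} {P : Fin 3 → {a : V // a ∉ Set.range φ} → Prop}
  {Q : Fin 3 → Fin 3 → Prop}

lemma mkG_ll {a b : {a : V // a ∉ Set.range φ}} :
    (mkG φ A P Q).Adj (Sum.inl a) (Sum.inl b) ↔ A.Adj a.1 b.1 := by
  unfold mkG; rw [SimpleGraph.fromRel_adj]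
  constructor
  · rintro ⟨-, h | h⟩
    · exact h
    · exact h.symm
  · intro h
    refine ⟨fun hab => ?_, Or.inl h⟩
    rw [Sum.inl.injEq] at hab
    exact A.irrefl (hab ▸ h)

lemma mkG_rl {j : Fin 3} {a : {a : V // a ∉ Set.range φ}} :
    (mkG φ A P Q).Adj (Sum.inr j) (Sum.inl a) ↔ P j a := by
  unfold mkG; rw [SimpleGraph.fromRel_adj]
  constructor
  · rintro ⟨-, h | h⟩
    · exact h
    · exact h.elim
  · intro h
    exact ⟨by simp, Or.inl h⟩

lemma mkG_lr {j : Fin 3} {a : {a : V // a ∉ Set.range φ}} :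
    (mkG φ A P Q).Adj (Sum.inl a) (Sum.inr j) ↔ P j a := by
  constructor
  · intro h; exact mkG_rl.1 h.symm
  · intro h; exact (mkG_rl.2 h).symm

lemma mkG_rr {j k : Fin 3} :
    (mkG φ A P Q).Adj (Sum.inr j) (Sum.inr k) ↔ j ≠ k ∧ (Q j k ∨ Q k j) := by
  unfold mkG; rw [SimpleGraph.fromRel_adj]
  constructor
  · rintro ⟨h, hq⟩
    exact ⟨by simpa using h, hq⟩
  · rintro ⟨h, hq⟩
    exact ⟨by simpa using h, hq⟩

lemma mkG_nbhd_l (a : {a : V // a ∉ Set.range φ}) :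
    (mkG φ A P Q).neighborSet (Sum.inl a) =
      (Sum.inl '' (Subtype.val ⁻¹' A.neighborSet a.1)) ∪ (Sum.inr '' {j | P j a}) := by
  ext x
  match x with
  | Sum.inl b =>
    simp only [SimpleGraph.mem_neighborSet, mkG_ll, Set.mem_union, Set.mem_image, Set.mem_preimage]
    constructor
    · intro h; exact Or.inl ⟨b, h, rfl⟩
    · rintro (⟨c, hc, hh⟩ | ⟨j, -, hh⟩)
      · cases Sum.inl_injective hh; exact hc
      · exact absurd hh (Sum.inr_ne_inl)
  | Sum.inr j =>
    simp only [SimpleGraph.mem_neighborSet, mkG_lr, Set.mem_union, Set.mem_image, Set.mem_setOf_eq]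
    constructor
    · intro h; exact Or.inr ⟨j, h, rfl⟩
    · rintro (⟨c, -, hh⟩ | ⟨k, hk, hh⟩)
      · exact absurd hh (Sum.inl_ne_inr)
      · cases Sum.inr_injective hh; exact hk

lemma mkG_nbhd_r (j : Fin 3) :
    (mkG φ A P Q).neighborSet (Sum.inr j) =
      (Sum.inl '' {a | P j a}) ∪ (Sum.inr '' {k | j ≠ k ∧ (Q j k ∨ Q k j)}) := by
  ext x
  match x with
  | Sum.inl b =>
    simp only [SimpleGraph.mem_neighborSet, mkG_rl, Set.mem_union, Set.mem_image, Set.mem_setOf_eq]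
    constructor
    · intro h; exact Or.inl ⟨b, h, rfl⟩
    · rintro (⟨c, hc, hh⟩ | ⟨k, -, hh⟩)
      · cases Sum.inl_injective hh; exact hc
      · exact absurd hh (Sum.inr_ne_inl)
  | Sum.inr k =>
    simp only [SimpleGraph.mem_neighborSet, mkG_rr, Set.mem_union, Set.mem_image, Set.mem_setOf_eq]
    constructor
    · intro h; exact Or.inr ⟨k, h, rfl⟩
    · rintro (⟨c, -, hh⟩ | ⟨k', hk, hh⟩)
      · exact absurd hh (Sum.inl_ne_inr)
      · cases Sum.inr_injective hh; exact hk

end Mk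

section Lift
variable {V : Type*} {T : SimpleGraph V}

/-- `T` viewed on `V ⊕ Fin 3` with three isolated vertices. -/
def liftG (T : SimpleGraph V) : SimpleGraph (V ⊕ Fin 3) :=
  SimpleGraph.fromRel fun x y =>
    match x, y with
    | Sum.inl a, Sum.inl b => T.Adj a b
    | _, _ => False

lemma liftG_ll {a b : V} : (liftG T).Adj (Sum.inl a) (Sum.inl b) ↔ T.Adj a b := by
  unfold liftG; rw [SimpleGraph.fromRel_adj]
  constructor
  · rintro ⟨-, h | h⟩
    · exact h
    · exact h.symm
  · intro h
    refine ⟨fun hab => ?_, Or.inl h⟩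
    rw [Sum.inl.injEq] at hab
    exact T.irrefl (hab ▸ h)

lemma liftG_no_inr : ∀ (x : V ⊕ Fin 3) (j : Fin 3), ¬ (liftG T).Adj x (Sum.inr j) := by
  intro x j h
  unfold liftG at h; rw [SimpleGraph.fromRel_adj] at h
  obtain ⟨-, h | h⟩ := h
  · match x with
    | Sum.inl a => exact h
    | Sum.inr k => exact h
  · exact h

lemma liftG_acyclic (h : T.IsAcyclic) : (liftG T).IsAcyclic :=
  acyclic_lift liftG_no_inr (fun a b hab => liftG_ll.1 hab) h

end Lift

section CaseA
variable {V : Type*} [Finite V] {G T C M : SimpleGraph V} {φ : Fin 1 ↪ V}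
  {ψ : Fin 3 → {a : V // a ∉ Set.range φ}}

lemma caseA (hcore : IsCoreEmbedding (starT (Fin 3)) G φ ψ)
    (hdec : IsThreeDecomposition G T C M)
    (h0 : T.Adj (φ 0) (ψ 0).1) (h1 : T.Adj (φ 0) (ψ 1).1) (h2 : T.Adj (φ 0) (ψ 2).1) :
    HasThreeDecomposition (transform triangleT G φ ψ) := by
  classical
  obtain ⟨hun, hTC, hTM, hCM, htree, hdC, hdM⟩ := hdec
  rw [union3_iff] at hun
  rw [disj_iff] at hTC hTM hCM
  have hTG : ∀ a b, T.Adj a b → G.Adj a b := fun a b h => (hun a b).1 (Or.inl h)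
  have hinj := psi_inj hcore
  have hu_edge : ∀ v, G.Adj (φ 0) v → ∃ o : Fin 3, (ψ o).1 = v := by
    intro v hG
    have hv : v ∉ Set.range φ := by
      intro hr
      rw [mem_range_phi] at hr
      exact G.irrefl (hr ▸ hG)
    obtain ⟨o, ho⟩ := (core_adj hcore ⟨v, hv⟩).1 hG
    exact ⟨o, by rw [ho]⟩
  have hTsi : ∀ o : Fin 3, T.Adj (φ 0) (ψ o).1 := by
    intro o; fin_cases o <;> assumption
  have hCu : ∀ v, ¬ C.Adj (φ 0) v := by
    intro v hCv
    obtain ⟨o, ho⟩ := hu_edge v ((hun _ _).1 (Or.inr (Or.inl hCv)))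
    exact hTC _ _ (ho ▸ hTsi o) (ho ▸ hCv)
  have hMu : ∀ v, ¬ M.Adj (φ 0) v := by
    intro v hMv
    obtain ⟨o, ho⟩ := hu_edge v ((hun _ _).1 (Or.inr (Or.inr hMv)))
    exact hTM _ _ (ho ▸ hTsi o) (ho ▸ hMv)
  refine ⟨mkG φ T (fun j a => ψ j = a) (fun j k => (j = 0 ∧ k = 1) ∨ (j = 1 ∧ k = 2)),
      mkG φ C (fun _ _ => False) (fun _ _ => False),
      mkG φ M (fun _ _ => False) (fun j k => j = 0 ∧ k = 2), ?_, ?_, ?_, ?_, ?_, ?_, ?_⟩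
  · -- union
    rw [union3_iff]
    intro x y
    rcases x with a | j <;> rcases y with b | k
    · rw [mkG_ll, mkG_ll, mkG_ll, kadj_ll]; exact hun a.1 b.1
    · rw [mkG_lr, mkG_lr, mkG_lr, kadj_lr]; tauto
    · rw [mkG_rl, mkG_rl, mkG_rl, kadj_rl]; tauto
    · rw [mkG_rr, mkG_rr, mkG_rr, kadj_rr]; revert j k; decide
  · rw [disj_iff]
    intro x y h h'
    rcases x with a | j <;> rcases y with b | k
    · exact hTC _ _ (mkG_ll.1 h) (mkG_ll.1 h')
    · exact mkG_lr.1 h'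
    · exact mkG_rl.1 h'
    · exact (mkG_rr.1 h').2.elim id id
  · rw [disj_iff]
    intro x y h h'
    rcases x with a | j <;> rcases y with b | k
    · exact hTM _ _ (mkG_ll.1 h) (mkG_ll.1 h')
    · exact mkG_lr.1 h'
    · exact mkG_rl.1 h'
    · have key : ∀ j k : Fin 3,
          ((j = 0 ∧ k = 1 ∨ j = 1 ∧ k = 2) ∨ (k = 0 ∧ j = 1 ∨ k = 1 ∧ j = 2)) →
          ((j = 0 ∧ k = 2) ∨ (k = 0 ∧ j = 2)) → False := by decide
      exact key j k (mkG_rr.1 h).2 (mkG_rr.1 h').2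
  · rw [disj_iff]
    intro x y h h'
    rcases x with a | j <;> rcases y with b | k
    · exact hCM _ _ (mkG_ll.1 h) (mkG_ll.1 h')
    · exact mkG_lr.1 h
    · exact mkG_rl.1 h
    · exact (mkG_rr.1 h).2.elim id id
  · -- tree
    constructor
    · -- connected
      have e01 : (mkG φ T (fun j a => ψ j = a)
          (fun j k => (j = 0 ∧ k = 1) ∨ (j = 1 ∧ k = 2))).Adj (Sum.inr 0) (Sum.inr 1) :=
        mkG_rr.2 ⟨by decide, Or.inl (Or.inl ⟨rfl, rfl⟩)⟩
      have e12 : (mkG φ T (fun j a => ψ j = a)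
          (fun j k => (j = 0 ∧ k = 1) ∨ (j = 1 ∧ k = 2))).Adj (Sum.inr 1) (Sum.inr 2) :=
        mkG_rr.2 ⟨by decide, Or.inl (Or.inr ⟨rfl, rfl⟩)⟩
      have hreach := reach_all φ (B := mkG φ T (fun j a => ψ j = a)
          (fun j k => (j = 0 ∧ k = 1) ∨ (j = 1 ∧ k = 2))) htree.isConnected (Sum.inr 1)
        (fun a c h => mkG_ll.2 h)
        (by
          intro a h
          obtain ⟨o, ho⟩ := hu_edge a.1 (hTG _ _ h).symm
          have e1 := mkG_rl (φ := φ) (A := T) (P := fun j a => ψ j = a)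
            (Q := fun j k => (j = 0 ∧ k = 1) ∨ (j = 1 ∧ k = 2)) (j := o) (a := a)
              |>.2 (Subtype.ext ho)
          refine e1.symm.reachable.trans ?_
          fin_cases o
          · exact e01.reachable
          · exact SimpleGraph.Reachable.refl _
          · exact e12.symm.reachable)
      rw [SimpleGraph.connected_iff]
      refine ⟨?_, ⟨Sum.inr 1⟩⟩
      have hall : ∀ x, (mkG φ T (fun j a => ψ j = a)
          (fun j k => (j = 0 ∧ k = 1) ∨ (j = 1 ∧ k = 2))).Reachable x (Sum.inr 1) := by
        intro x
        rcases x with a | j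
        · exact hreach a
        · fin_cases j
          · exact e01.reachable
          · exact SimpleGraph.Reachable.refl _
          · exact e12.symm.reachable
      exact fun x y => (hall x).trans (hall y).symm
    · -- acyclic
      have hb2 : (mkG φ T (fun j a => j = 1 ∧ (ψ 1 = a ∨ ψ 0 = a ∨ ψ 2 = a))
          (fun _ _ => False)).IsAcyclic := by
        set f : {a : V // a ∉ Set.range φ} ⊕ Fin 3 → V ⊕ Fin 3 :=
          Sum.elim (fun a => Sum.inl a.1) (fun j => if j = 1 then Sum.inl (φ 0) else Sum.inr j)
          with hf
        have hfinj : Function.Injective f := by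
          intro x y h
          rcases x with a | j <;> rcases y with b | k <;>
            simp only [hf, Sum.elim_inl, Sum.elim_inr] at h
          · exact congrArg Sum.inl (Subtype.ext (Sum.inl_injective h))
          · by_cases hk : k = 1
            · rw [if_pos hk] at h
              exact absurd (Sum.inl_injective h) (val_ne_u φ a)
            · rw [if_neg hk] at h
              exact absurd h Sum.inl_ne_inr
          · by_cases hj : j = 1
            · rw [if_pos hj] at h
              exact absurd (Sum.inl_injective h.symm) (val_ne_u φ b)
            · rw [if_neg hj] at h
              exact absurd h Sum.inr_ne_inl
          · by_cases hj : j = 1 <;> by_cases hk : k = 1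
            · rw [hj, hk]
            · rw [if_pos hj, if_neg hk] at h
              exact absurd h Sum.inl_ne_inr
            · rw [if_neg hj, if_pos hk] at h
              exact absurd h Sum.inr_ne_inl
            · rw [if_neg hj, if_neg hk] at h
              exact congrArg Sum.inr (Sum.inr_injective h)
        refine acyclic_of_hom_inj ⟨f, ?_⟩ hfinj (liftG_acyclic htree.IsAcyclic)
        · intro x y h
          rcases x with a | j <;> rcases y with b | k
          · simp only [hf, Sum.elim_inl]
            exact liftG_ll.2 (mkG_ll.1 h)
          · obtain ⟨rfl, hv⟩ := mkG_lr.1 h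
            simp only [hf, Sum.elim_inl, Sum.elim_inr, if_pos rfl]
            refine liftG_ll.2 ?_
            rcases hv with rfl | rfl | rfl
            · exact h1.symm
            · exact h0.symm
            · exact h2.symm
          · obtain ⟨rfl, hv⟩ := mkG_rl.1 h
            simp only [hf, Sum.elim_inl, Sum.elim_inr, if_pos rfl]
            refine liftG_ll.2 ?_
            rcases hv with rfl | rfl | rfl
            · exact h1
            · exact h0
            · exact h2
          · exact ((mkG_rr.1 h).2.elim id id).elim
      have hb1 : (mkG φ T (fun j a => (j = 1 ∧ (ψ 1 = a ∨ ψ 0 = a)) ∨ (j = 2 ∧ ψ 2 = a))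
          (fun j k => j = 1 ∧ k = 2)).IsAcyclic := by
        refine acyclic_suppress (w := Sum.inr 2) (x := Sum.inl (ψ 2)) (y := Sum.inr 1)
          ?_ ?_ ?_ ?_ hb2
        · intro z h
          rcases z with a | k
          · rcases mkG_rl.1 h with ⟨h', -⟩ | ⟨-, rfl⟩
            · exact absurd h' (by decide)
            · exact Or.inl rfl
          · obtain ⟨-, hq⟩ := mkG_rr.1 h
            rcases hq with ⟨h', -⟩ | ⟨rfl, -⟩
            · exact absurd h' (by decide)
            · exact Or.inr rfl
        · intro h
          rcases mkG_lr.1 h with ⟨-, hv | hv⟩ | ⟨h', -⟩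
          · exact absurd (hinj hv) (by decide)
          · exact absurd (hinj hv) (by decide)
          · exact absurd h' (by decide)
        · intro x y h hx hy
          rcases x with a | j <;> rcases y with b | k
          · exact mkG_ll.2 (mkG_ll.1 h)
          · rcases mkG_lr.1 h with ⟨rfl, hv⟩ | ⟨rfl, -⟩
            · exact mkG_lr.2 ⟨rfl, hv.imp id Or.inl⟩
            · exact absurd rfl hy
          · rcases mkG_rl.1 h with ⟨rfl, hv⟩ | ⟨rfl, -⟩
            · exact mkG_rl.2 ⟨rfl, hv.imp id Or.inl⟩
            · exact absurd rfl hx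
          · obtain ⟨-, hq⟩ := mkG_rr.1 h
            rcases hq with ⟨-, rfl⟩ | ⟨-, rfl⟩
            · exact absurd rfl hy
            · exact absurd rfl hx
        · exact mkG_lr.2 ⟨rfl, Or.inr (Or.inr rfl)⟩
      refine acyclic_suppress (w := Sum.inr 0) (x := Sum.inl (ψ 0)) (y := Sum.inr 1)
        ?_ ?_ ?_ ?_ hb1
      · intro z h
        rcases z with a | k
        · rw [mkG_rl] at h
          exact Or.inl (by rw [h])
        · obtain ⟨hne, hq⟩ := mkG_rr.1 h
          rcases hq with (⟨-, rfl⟩ | ⟨h', -⟩) | (⟨-, h'⟩ | ⟨-, h'⟩)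
          · exact Or.inr rfl
          · exact absurd h' (by decide)
          · exact absurd h' (by decide)
          · exact absurd h' (by decide)
      · intro h
        exact absurd (hinj (mkG_lr.1 h)) (by decide)
      · intro x y h hx hy
        rcases x with a | j <;> rcases y with b | k
        · exact mkG_ll.2 (mkG_ll.1 h)
        · have hv := mkG_lr.1 h
          have hk : k ≠ 0 := fun hk => hy (by rw [hk])
          fin_cases k
          · exact absurd rfl hk
          · exact mkG_lr.2 (Or.inl ⟨rfl, Or.inl hv⟩)
          · exact mkG_lr.2 (Or.inr ⟨rfl, hv⟩)
        · have hv := mkG_rl.1 h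
          have hj : j ≠ 0 := fun hj => hx (by rw [hj])
          fin_cases j
          · exact absurd rfl hj
          · exact mkG_rl.2 (Or.inl ⟨rfl, Or.inl hv⟩)
          · exact mkG_rl.2 (Or.inr ⟨rfl, hv⟩)
        · obtain ⟨hne, hq⟩ := mkG_rr.1 h
          have hj : j ≠ 0 := fun h' => hx (by rw [h'])
          have hk : k ≠ 0 := fun h' => hy (by rw [h'])
          rcases hq with (⟨h', -⟩ | ⟨rfl, rfl⟩) | (⟨h', -⟩ | ⟨rfl, rfl⟩)
          · exact absurd h' hj
          · exact mkG_rr.2 ⟨hne, Or.inl ⟨rfl, rfl⟩⟩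
          · exact absurd h' hk
          · exact mkG_rr.2 ⟨hne, Or.inr ⟨rfl, rfl⟩⟩
      · exact mkG_lr.2 (Or.inl ⟨rfl, Or.inr rfl⟩)
  · -- C degrees
    intro x
    rcases x with a | j
    · rw [mkG_nbhd_l]
      have hempty : {j : Fin 3 | False} = (∅ : Set (Fin 3)) := by ext j; simp
      rw [hempty, Set.image_empty, Set.union_empty,
        Set.ncard_image_of_injective _ Sum.inl_injective, ncard_val_preimage φ]
      have : C.neighborSet a.1 \ {φ 0} = C.neighborSet a.1 := by
        apply Set.diff_singleton_eq_self
        intro hmem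
        exact hCu a.1 ((SimpleGraph.mem_neighborSet C a.1 (φ 0)).1 hmem).symm
      rw [this]
      exact hdC a.1
    · rw [mkG_nbhd_r]
      have h1' : {a : {a : V // a ∉ Set.range φ} | False} = ∅ := by ext; simp
      have h2' : {k : Fin 3 | j ≠ k ∧ (False ∨ False)} = ∅ := by ext; simp
      rw [h1', h2', Set.image_empty, Set.image_empty, Set.union_empty]
      exact Or.inl (by simp)
  · -- M degrees
    intro x
    rcases x with a | j
    · rw [mkG_nbhd_l]
      have hempty : {j : Fin 3 | False} = (∅ : Set (Fin 3)) := by ext j; simp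
      rw [hempty, Set.image_empty, Set.union_empty,
        Set.ncard_image_of_injective _ Sum.inl_injective, ncard_val_preimage φ]
      have : M.neighborSet a.1 \ {φ 0} = M.neighborSet a.1 := by
        apply Set.diff_singleton_eq_self
        intro hmem
        exact hMu a.1 ((SimpleGraph.mem_neighborSet M a.1 (φ 0)).1 hmem).symm
      rw [this]
      exact hdM a.1
    · rw [mkG_nbhd_r]
      have h1' : {a : {a : V // a ∉ Set.range φ} | False} = ∅ := by ext; simp
      rw [h1', Set.image_empty, Set.empty_union,
        Set.ncard_image_of_injective _ Sum.inr_injective]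
      have key : ∀ j k1 k2 : Fin 3, (j ≠ k1 ∧ (j = 0 ∧ k1 = 2 ∨ k1 = 0 ∧ j = 2)) →
          (j ≠ k2 ∧ (j = 0 ∧ k2 = 2 ∨ k2 = 0 ∧ j = 2)) → k1 = k2 := by decide
      rw [Set.ncard_le_one_iff (Set.toFinite _)]
      intro k1 k2 hk1 hk2
      exact key j k1 k2 hk1 hk2

end CaseA

section CaseB
variable {V : Type*} [Finite V] {G T C M : SimpleGraph V} {φ : Fin 1 ↪ V}
  {ψ : Fin 3 → {a : V // a ∉ Set.range φ}}

lemma caseB (hcore : IsCoreEmbedding (starT (Fin 3)) G φ ψ)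
    (hdec : IsThreeDecomposition G T C M)
    (h0 : T.Adj (φ 0) (ψ 0).1) (hc1 : C.Adj (φ 0) (ψ 1).1) (hc2 : C.Adj (φ 0) (ψ 2).1) :
    HasThreeDecomposition (transform triangleT G φ ψ) := by
  classical
  obtain ⟨hun, hTC, hTM, hCM, htree, hdC, hdM⟩ := hdec
  rw [union3_iff] at hun
  rw [disj_iff] at hTC hTM hCM
  have hj3 : ∀ j : Fin 3, j = 0 ∨ j = 1 ∨ j = 2 := by decide
  have hTG : ∀ a b, T.Adj a b → G.Adj a b := fun a b h => (hun a b).1 (Or.inl h)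
  have hinj := psi_inj hcore
  have hu_edge : ∀ v, G.Adj (φ 0) v → ∃ o : Fin 3, (ψ o).1 = v := by
    intro v hG
    have hv : v ∉ Set.range φ := by
      intro hr
      rw [mem_range_phi] at hr
      exact G.irrefl (hr ▸ hG)
    obtain ⟨o, ho⟩ := (core_adj hcore ⟨v, hv⟩).1 hG
    exact ⟨o, by rw [ho]⟩
  have hTu : ∀ v, T.Adj (φ 0) v → v = (ψ 0).1 := by
    intro v hTv
    obtain ⟨o, rfl⟩ := hu_edge v ((hun _ _).1 (Or.inl hTv))
    rcases hj3 o with rfl | rfl | rfl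
    · rfl
    · exact absurd hTv (fun h => hTC _ _ h hc1)
    · exact absurd hTv (fun h => hTC _ _ h hc2)
  have hCu : ∀ v, C.Adj (φ 0) v → v = (ψ 1).1 ∨ v = (ψ 2).1 := by
    intro v hCv
    obtain ⟨o, rfl⟩ := hu_edge v ((hun _ _).1 (Or.inr (Or.inl hCv)))
    rcases hj3 o with rfl | rfl | rfl
    · exact absurd hCv (hTC _ _ h0)
    · exact Or.inl rfl
    · exact Or.inr rfl
  have hMu : ∀ v, ¬ M.Adj (φ 0) v := by
    intro v hMv
    obtain ⟨o, rfl⟩ := hu_edge v ((hun _ _).1 (Or.inr (Or.inr hMv)))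
    rcases hj3 o with rfl | rfl | rfl
    · exact hTM _ _ h0 hMv
    · exact hCM _ _ hc1 hMv
    · exact hCM _ _ hc2 hMv
  refine ⟨mkG φ T (fun j a => j = 0 ∧ ψ 0 = a) (fun j k => j = 0 ∧ (k = 1 ∨ k = 2)),
      mkG φ C (fun j a => (j = 1 ∧ ψ 1 = a) ∨ (j = 2 ∧ ψ 2 = a)) (fun j k => j = 1 ∧ k = 2),
      mkG φ M (fun _ _ => False) (fun _ _ => False), ?_, ?_, ?_, ?_, ?_, ?_, ?_⟩
  · rw [union3_iff]
    intro x y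
    rcases x with a | j <;> rcases y with b | k
    · rw [mkG_ll, mkG_ll, mkG_ll, kadj_ll]; exact hun a.1 b.1
    · rw [mkG_lr, mkG_lr, mkG_lr, kadj_lr]
      constructor
      · rintro (⟨rfl, h⟩ | (⟨rfl, h⟩ | ⟨rfl, h⟩) | h)
        · exact h
        · exact h
        · exact h
        · exact h.elim
      · rintro rfl
        rcases hj3 k with rfl | rfl | rfl
        · exact Or.inl ⟨rfl, rfl⟩
        · exact Or.inr (Or.inl (Or.inl ⟨rfl, rfl⟩))
        · exact Or.inr (Or.inl (Or.inr ⟨rfl, rfl⟩))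
    · rw [mkG_rl, mkG_rl, mkG_rl, kadj_rl]
      constructor
      · rintro (⟨rfl, h⟩ | (⟨rfl, h⟩ | ⟨rfl, h⟩) | h)
        · exact h
        · exact h
        · exact h
        · exact h.elim
      · rintro rfl
        rcases hj3 j with rfl | rfl | rfl
        · exact Or.inl ⟨rfl, rfl⟩
        · exact Or.inr (Or.inl (Or.inl ⟨rfl, rfl⟩))
        · exact Or.inr (Or.inl (Or.inr ⟨rfl, rfl⟩))
    · rw [mkG_rr, mkG_rr, mkG_rr, kadj_rr]; revert j k; decide
  · rw [disj_iff]
    intro x y h h'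
    rcases x with a | j <;> rcases y with b | k
    · exact hTC _ _ (mkG_ll.1 h) (mkG_ll.1 h')
    · obtain ⟨rfl, -⟩ := mkG_lr.1 h
      rcases mkG_lr.1 h' with ⟨h'', -⟩ | ⟨h'', -⟩ <;> exact absurd h'' (by decide)
    · obtain ⟨rfl, -⟩ := mkG_rl.1 h
      rcases mkG_rl.1 h' with ⟨h'', -⟩ | ⟨h'', -⟩ <;> exact absurd h'' (by decide)
    · have key : ∀ j k : Fin 3, ((j = 0 ∧ (k = 1 ∨ k = 2)) ∨ (k = 0 ∧ (j = 1 ∨ j = 2))) →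
          ((j = 1 ∧ k = 2) ∨ (k = 1 ∧ j = 2)) → False := by decide
      exact key j k (mkG_rr.1 h).2 (mkG_rr.1 h').2
  · rw [disj_iff]
    intro x y h h'
    rcases x with a | j <;> rcases y with b | k
    · exact hTM _ _ (mkG_ll.1 h) (mkG_ll.1 h')
    · exact mkG_lr.1 h'
    · exact mkG_rl.1 h'
    · exact (mkG_rr.1 h').2.elim id id
  · rw [disj_iff]
    intro x y h h'
    rcases x with a | j <;> rcases y with b | k
    · exact hCM _ _ (mkG_ll.1 h) (mkG_ll.1 h')
    · exact mkG_lr.1 h'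
    · exact mkG_rl.1 h'
    · exact (mkG_rr.1 h').2.elim id id
  · constructor
    · have e01 : (mkG φ T (fun j a => j = 0 ∧ ψ 0 = a)
          (fun j k => j = 0 ∧ (k = 1 ∨ k = 2))).Adj (Sum.inr 0) (Sum.inr 1) :=
        mkG_rr.2 ⟨by decide, Or.inl ⟨rfl, Or.inl rfl⟩⟩
      have e02 : (mkG φ T (fun j a => j = 0 ∧ ψ 0 = a)
          (fun j k => j = 0 ∧ (k = 1 ∨ k = 2))).Adj (Sum.inr 0) (Sum.inr 2) :=
        mkG_rr.2 ⟨by decide, Or.inl ⟨rfl, Or.inr rfl⟩⟩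
      have hreach := reach_all φ (B := mkG φ T (fun j a => j = 0 ∧ ψ 0 = a)
          (fun j k => j = 0 ∧ (k = 1 ∨ k = 2))) htree.isConnected (Sum.inr 0)
        (fun a c h => mkG_ll.2 h)
        (by
          intro a h
          have ha : a = ψ 0 := Subtype.ext (hTu a.1 h.symm)
          exact (mkG_rl.2 ⟨rfl, ha.symm⟩).symm.reachable)
      rw [SimpleGraph.connected_iff]
      refine ⟨?_, ⟨Sum.inr 0⟩⟩
      have hall : ∀ x, (mkG φ T (fun j a => j = 0 ∧ ψ 0 = a)
          (fun j k => j = 0 ∧ (k = 1 ∨ k = 2))).Reachable x (Sum.inr 0) := by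
        intro x
        rcases x with a | j
        · exact hreach a
        · rcases hj3 j with rfl | rfl | rfl
          · exact SimpleGraph.Reachable.refl _
          · exact e01.symm.reachable
          · exact e02.symm.reachable
      exact fun x y => (hall x).trans (hall y).symm
    · -- acyclic : two leaf removals then injective hom
      have hb2 : (mkG φ T (fun j a => j = 0 ∧ ψ 0 = a)
          (fun _ _ : Fin 3 => False)).IsAcyclic := by
        set f : {a : V // a ∉ Set.range φ} ⊕ Fin 3 → V ⊕ Fin 3 :=
          Sum.elim (fun a => Sum.inl a.1) (fun j => if j = 0 then Sum.inl (φ 0) else Sum.inr j)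
          with hf
        have hfinj : Function.Injective f := by
          intro x y h
          rcases x with a | j <;> rcases y with b | k <;>
            simp only [hf, Sum.elim_inl, Sum.elim_inr] at h
          · exact congrArg Sum.inl (Subtype.ext (Sum.inl_injective h))
          · by_cases hk : k = 0
            · rw [if_pos hk] at h
              exact absurd (Sum.inl_injective h) (val_ne_u φ a)
            · rw [if_neg hk] at h
              exact absurd h Sum.inl_ne_inr
          · by_cases hj : j = 0
            · rw [if_pos hj] at h
              exact absurd (Sum.inl_injective h.symm) (val_ne_u φ b)
            · rw [if_neg hj] at h
              exact absurd h Sum.inr_ne_inl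
          · by_cases hj : j = 0 <;> by_cases hk : k = 0
            · rw [hj, hk]
            · rw [if_pos hj, if_neg hk] at h
              exact absurd h Sum.inl_ne_inr
            · rw [if_neg hj, if_pos hk] at h
              exact absurd h Sum.inr_ne_inl
            · rw [if_neg hj, if_neg hk] at h
              exact congrArg Sum.inr (Sum.inr_injective h)
        refine acyclic_of_hom_inj ⟨f, ?_⟩ hfinj (liftG_acyclic htree.IsAcyclic)
        intro x y h
        rcases x with a | j <;> rcases y with b | k
        · simp only [hf, Sum.elim_inl]
          exact liftG_ll.2 (mkG_ll.1 h)
        · obtain ⟨rfl, hv⟩ := mkG_lr.1 h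
          simp only [hf, Sum.elim_inl, Sum.elim_inr, if_pos rfl]
          exact liftG_ll.2 (hv ▸ h0.symm)
        · obtain ⟨rfl, hv⟩ := mkG_rl.1 h
          simp only [hf, Sum.elim_inl, Sum.elim_inr, if_pos rfl]
          exact liftG_ll.2 (hv ▸ h0)
        · exact ((mkG_rr.1 h).2.elim id id).elim
      have hb1 : (mkG φ T (fun j a => j = 0 ∧ ψ 0 = a)
          (fun j k : Fin 3 => j = 0 ∧ k = 2)).IsAcyclic := by
        refine acyclic_leaf (w := Sum.inr 2) (x := Sum.inr 0) ?_ ?_ hb2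
        · intro z h
          rcases z with a | k
          · obtain ⟨h', -⟩ := mkG_rl.1 h
            exact absurd h' (by decide)
          · obtain ⟨-, hq⟩ := mkG_rr.1 h
            rcases hq with ⟨h', -⟩ | ⟨rfl, -⟩
            · exact absurd h' (by decide)
            · rfl
        · intro x y h hx hy
          rcases x with a | j <;> rcases y with b | k
          · exact mkG_ll.2 (mkG_ll.1 h)
          · exact mkG_lr.2 (mkG_lr.1 h)
          · exact mkG_rl.2 (mkG_rl.1 h)
          · obtain ⟨-, hq⟩ := mkG_rr.1 h
            rcases hq with ⟨-, rfl⟩ | ⟨-, rfl⟩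
            · exact absurd rfl hy
            · exact absurd rfl hx
      refine acyclic_leaf (w := Sum.inr 1) (x := Sum.inr 0) ?_ ?_ hb1
      · intro z h
        rcases z with a | k
        · obtain ⟨h', -⟩ := mkG_rl.1 h
          exact absurd h' (by decide)
        · obtain ⟨-, hq⟩ := mkG_rr.1 h
          rcases hq with ⟨h', -⟩ | ⟨rfl, -⟩
          · exact absurd h' (by decide)
          · rfl
      · intro x y h hx hy
        rcases x with a | j <;> rcases y with b | k
        · exact mkG_ll.2 (mkG_ll.1 h)
        · exact mkG_lr.2 (mkG_lr.1 h)
        · exact mkG_rl.2 (mkG_rl.1 h)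
        · obtain ⟨hne, hq⟩ := mkG_rr.1 h
          rcases hq with ⟨rfl, hk⟩ | ⟨rfl, hj⟩
          · rcases hk with rfl | rfl
            · exact absurd rfl hy
            · exact mkG_rr.2 ⟨hne, Or.inl ⟨rfl, rfl⟩⟩
          · rcases hj with rfl | rfl
            · exact absurd rfl hx
            · exact mkG_rr.2 ⟨hne, Or.inr ⟨rfl, rfl⟩⟩
  · -- C degrees
    intro x
    rcases x with a | j
    · rw [mkG_nbhd_l, ncard_image_sum φ, ncard_val_preimage φ]
      by_cases ha1 : a = ψ 1
      · subst ha1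
        have ht : {j : Fin 3 | (j = 1 ∧ ψ 1 = ψ 1) ∨ (j = 2 ∧ ψ 2 = ψ 1)} = {1} := by
          ext j
          simp only [Set.mem_setOf_eq, Set.mem_singleton_iff]
          constructor
          · rintro (⟨rfl, -⟩ | ⟨rfl, h⟩)
            · rfl
            · exact absurd (hinj h) (by decide)
          · rintro rfl; simp
        have hmem : φ 0 ∈ C.neighborSet (ψ 1).1 := hc1.symm
        rw [ht, Set.ncard_singleton, Set.ncard_diff_singleton_of_mem hmem]
        rcases hdC (ψ 1).1 with hh | hh
        · rw [Set.ncard_eq_zero (Set.toFinite _)] at hh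
          rw [hh] at hmem
          exact absurd hmem (Set.notMem_empty _)
        · rw [hh]
          exact Or.inr rfl
      · by_cases ha2 : a = ψ 2
        · subst ha2
          have ht : {j : Fin 3 | (j = 1 ∧ ψ 1 = ψ 2) ∨ (j = 2 ∧ ψ 2 = ψ 2)} = {2} := by
            ext j
            simp only [Set.mem_setOf_eq, Set.mem_singleton_iff]
            constructor
            · rintro (⟨rfl, h⟩ | ⟨rfl, -⟩)
              · exact absurd (hinj h) (by decide)
              · rfl
            · rintro rfl; simp
          have hmem : φ 0 ∈ C.neighborSet (ψ 2).1 := hc2.symm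
          rw [ht, Set.ncard_singleton, Set.ncard_diff_singleton_of_mem hmem]
          rcases hdC (ψ 2).1 with hh | hh
          · rw [Set.ncard_eq_zero (Set.toFinite _)] at hh
            rw [hh] at hmem
            exact absurd hmem (Set.notMem_empty _)
          · rw [hh]
            exact Or.inr rfl
        · have ht : {j : Fin 3 | (j = 1 ∧ ψ 1 = a) ∨ (j = 2 ∧ ψ 2 = a)} = ∅ := by
            ext j
            simp only [Set.mem_setOf_eq, Set.mem_empty_iff_false, iff_false]
            rintro (⟨-, h⟩ | ⟨-, h⟩)
            · exact ha1 h.symm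
            · exact ha2 h.symm
          have hnmem : φ 0 ∉ C.neighborSet a.1 := by
            intro hmem
            rcases hCu a.1 (((SimpleGraph.mem_neighborSet C a.1 (φ 0)).1 hmem).symm) with h | h
            · exact ha1 (Subtype.ext h)
            · exact ha2 (Subtype.ext h)
          rw [ht, Set.ncard_empty, Set.diff_singleton_eq_self hnmem, add_zero]
          exact hdC a.1
    · rw [mkG_nbhd_r]
      rcases hj3 j with rfl | rfl | rfl
      · have hs : {a : {a : V // a ∉ Set.range φ} |
            ((0 : Fin 3) = 1 ∧ ψ 1 = a) ∨ ((0 : Fin 3) = 2 ∧ ψ 2 = a)} = ∅ := by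
          ext a
          simp only [Set.mem_setOf_eq, Set.mem_empty_iff_false, iff_false]
          rintro (⟨h, -⟩ | ⟨h, -⟩) <;> exact absurd h (by decide)
        have ht : {k : Fin 3 | (0 : Fin 3) ≠ k ∧
            (((0 : Fin 3) = 1 ∧ k = 2) ∨ (k = 1 ∧ (0 : Fin 3) = 2))} = ∅ := by
          ext k; revert k; decide
        rw [hs, ht, Set.image_empty, Set.image_empty, Set.union_empty]
        exact Or.inl (by simp)
      · have hs : {a : {a : V // a ∉ Set.range φ} |
            ((1 : Fin 3) = 1 ∧ ψ 1 = a) ∨ ((1 : Fin 3) = 2 ∧ ψ 2 = a)} = {ψ 1} := by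
          ext a
          simp only [Set.mem_setOf_eq, Set.mem_singleton_iff]
          constructor
          · rintro (⟨-, rfl⟩ | ⟨h, -⟩)
            · rfl
            · exact absurd h (by decide)
          · rintro rfl; simp
        have ht : {k : Fin 3 | (1 : Fin 3) ≠ k ∧
            (((1 : Fin 3) = 1 ∧ k = 2) ∨ (k = 1 ∧ (1 : Fin 3) = 2))} = {2} := by
          ext k; revert k; decide
        rw [hs, ht, ncard_image_sum φ, Set.ncard_singleton, Set.ncard_singleton]
        exact Or.inr rfl
      · have hs : {a : {a : V // a ∉ Set.range φ} |
            ((2 : Fin 3) = 1 ∧ ψ 1 = a) ∨ ((2 : Fin 3) = 2 ∧ ψ 2 = a)} = {ψ 2} := by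
          ext a
          simp only [Set.mem_setOf_eq, Set.mem_singleton_iff]
          constructor
          · rintro (⟨h, -⟩ | ⟨-, rfl⟩)
            · exact absurd h (by decide)
            · rfl
          · rintro rfl; simp
        have ht : {k : Fin 3 | (2 : Fin 3) ≠ k ∧
            (((2 : Fin 3) = 1 ∧ k = 2) ∨ (k = 1 ∧ (2 : Fin 3) = 2))} = {1} := by
          ext k; revert k; decide
        rw [hs, ht, ncard_image_sum φ, Set.ncard_singleton, Set.ncard_singleton]
        exact Or.inr rfl
  · -- M degrees
    intro x
    rcases x with a | j
    · rw [mkG_nbhd_l]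
      have hempty : {j : Fin 3 | False} = (∅ : Set (Fin 3)) := by ext j; simp
      rw [hempty, Set.image_empty, Set.union_empty,
        Set.ncard_image_of_injective _ Sum.inl_injective, ncard_val_preimage φ]
      have : M.neighborSet a.1 \ {φ 0} = M.neighborSet a.1 := by
        apply Set.diff_singleton_eq_self
        intro hmem
        exact hMu a.1 ((SimpleGraph.mem_neighborSet M a.1 (φ 0)).1 hmem).symm
      rw [this]
      exact hdM a.1
    · rw [mkG_nbhd_r]
      have h1' : {a : {a : V // a ∉ Set.range φ} | False} = ∅ := by ext; simp
      have h2' : {k : Fin 3 | j ≠ k ∧ (False ∨ False)} = ∅ := by ext; simp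
      rw [h1', h2', Set.image_empty, Set.image_empty, Set.union_empty]
      simp

end CaseB

section CaseC
variable {V : Type*} [Finite V] {G T C M : SimpleGraph V} {φ : Fin 1 ↪ V}
  {ψ : Fin 3 → {a : V // a ∉ Set.range φ}}

lemma caseC (hcore : IsCoreEmbedding (starT (Fin 3)) G φ ψ)
    (hdec : IsThreeDecomposition G T C M)
    (h0 : T.Adj (φ 0) (ψ 0).1) (h1 : T.Adj (φ 0) (ψ 1).1) (hm2 : M.Adj (φ 0) (ψ 2).1) :
    HasThreeDecomposition (transform triangleT G φ ψ) := by
  classical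
  obtain ⟨hun, hTC, hTM, hCM, htree, hdC, hdM⟩ := hdec
  rw [union3_iff] at hun
  rw [disj_iff] at hTC hTM hCM
  have hj3 : ∀ j : Fin 3, j = 0 ∨ j = 1 ∨ j = 2 := by decide
  have hTG : ∀ a b, T.Adj a b → G.Adj a b := fun a b h => (hun a b).1 (Or.inl h)
  have hinj := psi_inj hcore
  have hu_edge : ∀ v, G.Adj (φ 0) v → ∃ o : Fin 3, (ψ o).1 = v := by
    intro v hG
    have hv : v ∉ Set.range φ := by
      intro hr
      rw [mem_range_phi] at hr
      exact G.irrefl (hr ▸ hG)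
    obtain ⟨o, ho⟩ := (core_adj hcore ⟨v, hv⟩).1 hG
    exact ⟨o, by rw [ho]⟩
  have hTu : ∀ v, T.Adj (φ 0) v → v = (ψ 0).1 ∨ v = (ψ 1).1 := by
    intro v hTv
    obtain ⟨o, rfl⟩ := hu_edge v ((hun _ _).1 (Or.inl hTv))
    rcases hj3 o with rfl | rfl | rfl
    · exact Or.inl rfl
    · exact Or.inr rfl
    · exact absurd hTv (fun h => hTM _ _ h hm2)
  have hCu : ∀ v, ¬ C.Adj (φ 0) v := by
    intro v hCv
    obtain ⟨o, rfl⟩ := hu_edge v ((hun _ _).1 (Or.inr (Or.inl hCv)))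
    rcases hj3 o with rfl | rfl | rfl
    · exact hTC _ _ h0 hCv
    · exact hTC _ _ h1 hCv
    · exact hCM _ _ hCv hm2
  have hMu : ∀ v, M.Adj (φ 0) v → v = (ψ 2).1 := by
    intro v hMv
    obtain ⟨o, rfl⟩ := hu_edge v ((hun _ _).1 (Or.inr (Or.inr hMv)))
    rcases hj3 o with rfl | rfl | rfl
    · exact absurd hMv (hTM _ _ h0)
    · exact absurd hMv (hTM _ _ h1)
    · rfl
  refine ⟨mkG φ T (fun j a => (j = 0 ∧ ψ 0 = a) ∨ (j = 1 ∧ ψ 1 = a))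
        (fun j k => (j = 0 ∧ k = 2) ∨ (j = 2 ∧ k = 1)),
      mkG φ C (fun _ _ => False) (fun _ _ => False),
      mkG φ M (fun j a => j = 2 ∧ ψ 2 = a) (fun j k => j = 0 ∧ k = 1),
      ?_, ?_, ?_, ?_, ?_, ?_, ?_⟩
  · rw [union3_iff]
    intro x y
    rcases x with a | j <;> rcases y with b | k
    · rw [mkG_ll, mkG_ll, mkG_ll, kadj_ll]; exact hun a.1 b.1
    · rw [mkG_lr, mkG_lr, mkG_lr, kadj_lr]
      constructor
      · rintro ((⟨rfl, h⟩ | ⟨rfl, h⟩) | h | ⟨rfl, h⟩)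
        · exact h
        · exact h
        · exact h.elim
        · exact h
      · rintro rfl
        rcases hj3 k with rfl | rfl | rfl
        · exact Or.inl (Or.inl ⟨rfl, rfl⟩)
        · exact Or.inl (Or.inr ⟨rfl, rfl⟩)
        · exact Or.inr (Or.inr ⟨rfl, rfl⟩)
    · rw [mkG_rl, mkG_rl, mkG_rl, kadj_rl]
      constructor
      · rintro ((⟨rfl, h⟩ | ⟨rfl, h⟩) | h | ⟨rfl, h⟩)
        · exact h
        · exact h
        · exact h.elim
        · exact h
      · rintro rfl
        rcases hj3 j with rfl | rfl | rfl
        · exact Or.inl (Or.inl ⟨rfl, rfl⟩)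
        · exact Or.inl (Or.inr ⟨rfl, rfl⟩)
        · exact Or.inr (Or.inr ⟨rfl, rfl⟩)
    · rw [mkG_rr, mkG_rr, mkG_rr, kadj_rr]; revert j k; decide
  · rw [disj_iff]
    intro x y h h'
    rcases x with a | j <;> rcases y with b | k
    · exact hTC _ _ (mkG_ll.1 h) (mkG_ll.1 h')
    · exact mkG_lr.1 h'
    · exact mkG_rl.1 h'
    · exact (mkG_rr.1 h').2.elim id id
  · rw [disj_iff]
    intro x y h h'
    rcases x with a | j <;> rcases y with b | k
    · exact hTM _ _ (mkG_ll.1 h) (mkG_ll.1 h')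
    · obtain ⟨rfl, -⟩ := mkG_lr.1 h'
      rcases mkG_lr.1 h with ⟨h'', -⟩ | ⟨h'', -⟩ <;> exact absurd h'' (by decide)
    · obtain ⟨rfl, -⟩ := mkG_rl.1 h'
      rcases mkG_rl.1 h with ⟨h'', -⟩ | ⟨h'', -⟩ <;> exact absurd h'' (by decide)
    · have key : ∀ j k : Fin 3,
          (((j = 0 ∧ k = 2) ∨ (j = 2 ∧ k = 1)) ∨ ((k = 0 ∧ j = 2) ∨ (k = 2 ∧ j = 1))) →
          ((j = 0 ∧ k = 1) ∨ (k = 0 ∧ j = 1)) → False := by decide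
      exact key j k (mkG_rr.1 h).2 (mkG_rr.1 h').2
  · rw [disj_iff]
    intro x y h h'
    rcases x with a | j <;> rcases y with b | k
    · exact hCM _ _ (mkG_ll.1 h) (mkG_ll.1 h')
    · exact mkG_lr.1 h
    · exact mkG_rl.1 h
    · exact (mkG_rr.1 h).2.elim id id
  · constructor
    · have e02 : (mkG φ T (fun j a => (j = 0 ∧ ψ 0 = a) ∨ (j = 1 ∧ ψ 1 = a))
          (fun j k => (j = 0 ∧ k = 2) ∨ (j = 2 ∧ k = 1))).Adj (Sum.inr 0) (Sum.inr 2) :=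
        mkG_rr.2 ⟨by decide, Or.inl (Or.inl ⟨rfl, rfl⟩)⟩
      have e21 : (mkG φ T (fun j a => (j = 0 ∧ ψ 0 = a) ∨ (j = 1 ∧ ψ 1 = a))
          (fun j k => (j = 0 ∧ k = 2) ∨ (j = 2 ∧ k = 1))).Adj (Sum.inr 2) (Sum.inr 1) :=
        mkG_rr.2 ⟨by decide, Or.inl (Or.inr ⟨rfl, rfl⟩)⟩
      have hreach := reach_all φ (B := mkG φ T (fun j a => (j = 0 ∧ ψ 0 = a) ∨ (j = 1 ∧ ψ 1 = a))
          (fun j k => (j = 0 ∧ k = 2) ∨ (j = 2 ∧ k = 1))) htree.isConnected (Sum.inr 2)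
        (fun a c h => mkG_ll.2 h)
        (by
          intro a h
          rcases hTu a.1 h.symm with ha | ha
          · have e := mkG_rl (φ := φ) (A := T)
              (P := fun j a => (j = 0 ∧ ψ 0 = a) ∨ (j = 1 ∧ ψ 1 = a))
              (Q := fun j k => (j = 0 ∧ k = 2) ∨ (j = 2 ∧ k = 1)) (j := 0) (a := a)
                |>.2 (Or.inl ⟨rfl, Subtype.ext ha.symm⟩)
            exact e.symm.reachable.trans e02.reachable
          · have e := mkG_rl (φ := φ) (A := T)
              (P := fun j a => (j = 0 ∧ ψ 0 = a) ∨ (j = 1 ∧ ψ 1 = a))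
              (Q := fun j k => (j = 0 ∧ k = 2) ∨ (j = 2 ∧ k = 1)) (j := 1) (a := a)
                |>.2 (Or.inr ⟨rfl, Subtype.ext ha.symm⟩)
            exact e.symm.reachable.trans e21.symm.reachable)
      rw [SimpleGraph.connected_iff]
      refine ⟨?_, ⟨Sum.inr 2⟩⟩
      have hall : ∀ x, (mkG φ T (fun j a => (j = 0 ∧ ψ 0 = a) ∨ (j = 1 ∧ ψ 1 = a))
          (fun j k => (j = 0 ∧ k = 2) ∨ (j = 2 ∧ k = 1))).Reachable x (Sum.inr 2) := by
        intro x
        rcases x with a | j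
        · exact hreach a
        · rcases hj3 j with rfl | rfl | rfl
          · exact e02.reachable
          · exact e21.symm.reachable
          · exact SimpleGraph.Reachable.refl _
      exact fun x y => (hall x).trans (hall y).symm
    · -- acyclic : suppress inr 0 then inr 1, then injective hom
      have hb2 : (mkG φ T (fun j a => j = 2 ∧ (ψ 0 = a ∨ ψ 1 = a))
          (fun _ _ : Fin 3 => False)).IsAcyclic := by
        set f : {a : V // a ∉ Set.range φ} ⊕ Fin 3 → V ⊕ Fin 3 :=
          Sum.elim (fun a => Sum.inl a.1) (fun j => if j = 2 then Sum.inl (φ 0) else Sum.inr j)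
          with hf
        have hfinj : Function.Injective f := by
          intro x y h
          rcases x with a | j <;> rcases y with b | k <;>
            simp only [hf, Sum.elim_inl, Sum.elim_inr] at h
          · exact congrArg Sum.inl (Subtype.ext (Sum.inl_injective h))
          · by_cases hk : k = 2
            · rw [if_pos hk] at h
              exact absurd (Sum.inl_injective h) (val_ne_u φ a)
            · rw [if_neg hk] at h
              exact absurd h Sum.inl_ne_inr
          · by_cases hj : j = 2
            · rw [if_pos hj] at h
              exact absurd (Sum.inl_injective h.symm) (val_ne_u φ b)
            · rw [if_neg hj] at h
              exact absurd h Sum.inr_ne_inl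
          · by_cases hj : j = 2 <;> by_cases hk : k = 2
            · rw [hj, hk]
            · rw [if_pos hj, if_neg hk] at h
              exact absurd h Sum.inl_ne_inr
            · rw [if_neg hj, if_pos hk] at h
              exact absurd h Sum.inr_ne_inl
            · rw [if_neg hj, if_neg hk] at h
              exact congrArg Sum.inr (Sum.inr_injective h)
        refine acyclic_of_hom_inj ⟨f, ?_⟩ hfinj (liftG_acyclic htree.IsAcyclic)
        intro x y h
        rcases x with a | j <;> rcases y with b | k
        · simp only [hf, Sum.elim_inl]
          exact liftG_ll.2 (mkG_ll.1 h)
        · obtain ⟨rfl, hv⟩ := mkG_lr.1 h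
          simp only [hf, Sum.elim_inl, Sum.elim_inr, if_pos rfl]
          refine liftG_ll.2 ?_
          rcases hv with rfl | rfl
          · exact h0.symm
          · exact h1.symm
        · obtain ⟨rfl, hv⟩ := mkG_rl.1 h
          simp only [hf, Sum.elim_inl, Sum.elim_inr, if_pos rfl]
          refine liftG_ll.2 ?_
          rcases hv with rfl | rfl
          · exact h0
          · exact h1
        · exact ((mkG_rr.1 h).2.elim id id).elim
      have hb1 : (mkG φ T (fun j a => (j = 2 ∧ ψ 0 = a) ∨ (j = 1 ∧ ψ 1 = a))
          (fun j k : Fin 3 => j = 2 ∧ k = 1)).IsAcyclic := by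
        refine acyclic_suppress (w := Sum.inr 1) (x := Sum.inl (ψ 1)) (y := Sum.inr 2)
          ?_ ?_ ?_ ?_ hb2
        · intro z h
          rcases z with a | k
          · rcases mkG_rl.1 h with ⟨h', -⟩ | ⟨-, rfl⟩
            · exact absurd h' (by decide)
            · exact Or.inl rfl
          · obtain ⟨-, hq⟩ := mkG_rr.1 h
            rcases hq with ⟨h', -⟩ | ⟨rfl, -⟩
            · exact absurd h' (by decide)
            · exact Or.inr rfl
        · intro h
          rcases mkG_lr.1 h with ⟨-, hv⟩ | ⟨h', -⟩
          · exact absurd (hinj hv) (by decide)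
          · exact absurd h' (by decide)
        · intro x y h hx hy
          rcases x with a | j <;> rcases y with b | k
          · exact mkG_ll.2 (mkG_ll.1 h)
          · rcases mkG_lr.1 h with ⟨rfl, hv⟩ | ⟨rfl, -⟩
            · exact mkG_lr.2 ⟨rfl, Or.inl hv⟩
            · exact absurd rfl hy
          · rcases mkG_rl.1 h with ⟨rfl, hv⟩ | ⟨rfl, -⟩
            · exact mkG_rl.2 ⟨rfl, Or.inl hv⟩
            · exact absurd rfl hx
          · obtain ⟨-, hq⟩ := mkG_rr.1 h
            rcases hq with ⟨-, rfl⟩ | ⟨-, rfl⟩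
            · exact absurd rfl hy
            · exact absurd rfl hx
        · exact mkG_lr.2 ⟨rfl, Or.inr rfl⟩
      refine acyclic_suppress (w := Sum.inr 0) (x := Sum.inl (ψ 0)) (y := Sum.inr 2)
        ?_ ?_ ?_ ?_ hb1
      · intro z h
        rcases z with a | k
        · rcases mkG_rl.1 h with ⟨-, rfl⟩ | ⟨h', -⟩
          · exact Or.inl rfl
          · exact absurd h' (by decide)
        · obtain ⟨-, hq⟩ := mkG_rr.1 h
          rcases hq with (⟨-, rfl⟩ | ⟨h', -⟩) | (⟨-, h'⟩ | ⟨-, h'⟩)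
          · exact Or.inr rfl
          · exact absurd h' (by decide)
          · exact absurd h' (by decide)
          · exact absurd h' (by decide)
      · intro h
        rcases mkG_lr.1 h with ⟨h', -⟩ | ⟨-, hv⟩
        · exact absurd h' (by decide)
        · exact absurd (hinj hv) (by decide)
      · intro x y h hx hy
        rcases x with a | j <;> rcases y with b | k
        · exact mkG_ll.2 (mkG_ll.1 h)
        · rcases mkG_lr.1 h with ⟨rfl, -⟩ | ⟨rfl, hv⟩
          · exact absurd rfl hy
          · exact mkG_lr.2 (Or.inr ⟨rfl, hv⟩)
        · rcases mkG_rl.1 h with ⟨rfl, -⟩ | ⟨rfl, hv⟩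
          · exact absurd rfl hx
          · exact mkG_rl.2 (Or.inr ⟨rfl, hv⟩)
        · obtain ⟨hne, hq⟩ := mkG_rr.1 h
          rcases hq with (⟨rfl, -⟩ | ⟨rfl, rfl⟩) | (⟨rfl, -⟩ | ⟨rfl, rfl⟩)
          · exact absurd rfl hx
          · exact mkG_rr.2 ⟨hne, Or.inl ⟨rfl, rfl⟩⟩
          · exact absurd rfl hy
          · exact mkG_rr.2 ⟨hne, Or.inr ⟨rfl, rfl⟩⟩
      · exact mkG_lr.2 (Or.inl ⟨rfl, rfl⟩)
  · -- C degrees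
    intro x
    rcases x with a | j
    · rw [mkG_nbhd_l]
      have hempty : {j : Fin 3 | False} = (∅ : Set (Fin 3)) := by ext j; simp
      rw [hempty, Set.image_empty, Set.union_empty,
        Set.ncard_image_of_injective _ Sum.inl_injective, ncard_val_preimage φ]
      have : C.neighborSet a.1 \ {φ 0} = C.neighborSet a.1 := by
        apply Set.diff_singleton_eq_self
        intro hmem
        exact hCu a.1 ((SimpleGraph.mem_neighborSet C a.1 (φ 0)).1 hmem).symm
      rw [this]
      exact hdC a.1
    · rw [mkG_nbhd_r]
      have h1' : {a : {a : V // a ∉ Set.range φ} | False} = ∅ := by ext; simp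
      have h2' : {k : Fin 3 | j ≠ k ∧ (False ∨ False)} = ∅ := by ext; simp
      rw [h1', h2', Set.image_empty, Set.image_empty, Set.union_empty]
      exact Or.inl (by simp)
  · -- M degrees
    intro x
    rcases x with a | j
    · rw [mkG_nbhd_l, ncard_image_sum φ, ncard_val_preimage φ]
      by_cases ha2 : a = ψ 2
      · subst ha2
        have ht : {j : Fin 3 | j = 2 ∧ ψ 2 = ψ 2} = {2} := by
          ext j
          simp only [Set.mem_setOf_eq, Set.mem_singleton_iff]
          constructor
          · rintro ⟨rfl, -⟩; rfl
          · rintro rfl; simp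
        have hmem : φ 0 ∈ M.neighborSet (ψ 2).1 := hm2.symm
        rw [ht, Set.ncard_singleton, Set.ncard_diff_singleton_of_mem hmem]
        have hle := hdM (ψ 2).1
        have hpos : 1 ≤ (M.neighborSet (ψ 2).1).ncard := by
          rw [Nat.one_le_iff_ne_zero]
          intro hzero
          rw [Set.ncard_eq_zero (Set.toFinite _)] at hzero
          rw [hzero] at hmem
          exact absurd hmem (Set.notMem_empty _)
        omega
      · have ht : {j : Fin 3 | j = 2 ∧ ψ 2 = a} = ∅ := by
          ext j
          simp only [Set.mem_setOf_eq, Set.mem_empty_iff_false, iff_false]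
          rintro ⟨-, h⟩
          exact ha2 h.symm
        have hnmem : φ 0 ∉ M.neighborSet a.1 := by
          intro hmem
          exact ha2 (Subtype.ext (hMu a.1 ((SimpleGraph.mem_neighborSet M a.1 (φ 0)).1 hmem).symm))
        rw [ht, Set.ncard_empty, Set.diff_singleton_eq_self hnmem, add_zero]
        exact hdM a.1
    · rw [mkG_nbhd_r]
      rcases hj3 j with rfl | rfl | rfl
      · have hs : {a : {a : V // a ∉ Set.range φ} | (0 : Fin 3) = 2 ∧ ψ 2 = a} = ∅ := by
          ext a
          simp only [Set.mem_setOf_eq, Set.mem_empty_iff_false, iff_false]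
          rintro ⟨h, -⟩
          exact absurd h (by decide)
        have ht : {k : Fin 3 | (0 : Fin 3) ≠ k ∧
            (((0 : Fin 3) = 0 ∧ k = 1) ∨ (k = 0 ∧ (0 : Fin 3) = 1))} = {1} := by
          ext k; revert k; decide
        rw [hs, ht, ncard_image_sum φ, Set.ncard_empty, Set.ncard_singleton]
      · have hs : {a : {a : V // a ∉ Set.range φ} | (1 : Fin 3) = 2 ∧ ψ 2 = a} = ∅ := by
          ext a
          simp only [Set.mem_setOf_eq, Set.mem_empty_iff_false, iff_false]
          rintro ⟨h, -⟩
          exact absurd h (by decide)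
        have ht : {k : Fin 3 | (1 : Fin 3) ≠ k ∧
            (((1 : Fin 3) = 0 ∧ k = 1) ∨ (k = 0 ∧ (1 : Fin 3) = 1))} = {0} := by
          ext k; revert k; decide
        rw [hs, ht, ncard_image_sum φ, Set.ncard_empty, Set.ncard_singleton]
      · have hs : {a : {a : V // a ∉ Set.range φ} | (2 : Fin 3) = 2 ∧ ψ 2 = a} = {ψ 2} := by
          ext a
          simp only [Set.mem_setOf_eq, Set.mem_singleton_iff]
          constructor
          · rintro ⟨-, rfl⟩; rfl
          · rintro rfl; simp
        have ht : {k : Fin 3 | (2 : Fin 3) ≠ k ∧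
            (((2 : Fin 3) = 0 ∧ k = 1) ∨ (k = 0 ∧ (2 : Fin 3) = 1))} = ∅ := by
          ext k; revert k; decide
        rw [hs, ht, ncard_image_sum φ, Set.ncard_empty, Set.ncard_singleton]

end CaseC


/-- The extension replacing a single vertex by a triangle is 3-compatible:
if the cubic graph `G` has a 3-decomposition and `H` is obtained from `G` by deleting a
vertex `u`, adding a triangle and joining its three vertices to the three former neighbours
of `u` (one each), then `H` has a 3-decomposition. -/
theorem triangle_extension_compatible {V W : Type} [Finite V] [Finite W]
    (G : SimpleGraph V) (H : SimpleGraph W)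
    (hcubic : IsCubic G) (hdec : HasThreeDecomposition G)
    (hext : IsTransformationOf (starT (Fin 3)) triangleT G H) :
    HasThreeDecomposition H := by
  classical
  obtain ⟨φ, ψ0, hcore0, hsimple, ⟨e⟩⟩ := hext
  refine hasThreeDecomposition_of_iso e ?_
  obtain ⟨T, C, M, hdec⟩ := hdec
  have hj3 : ∀ j : Fin 3, j = 0 ∨ j = 1 ∨ j = 2 := by decide
  have hun := union3_iff.1 hdec.1
  have hTC := disj_iff.1 hdec.2.1
  have hTM := disj_iff.1 hdec.2.2.1
  have hCM := disj_iff.1 hdec.2.2.2.1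
  have htree := hdec.2.2.2.2.1
  have hdC := hdec.2.2.2.2.2.1
  have hdM := hdec.2.2.2.2.2.2
  have hu_edge : ∀ (ψ' : Fin 3 → {a : V // a ∉ Set.range φ}),
      IsCoreEmbedding (starT (Fin 3)) G φ ψ' →
      ∀ v, G.Adj (φ 0) v → ∃ o : Fin 3, (ψ' o).1 = v := by
    intro ψ' hcore' v hG
    have hv : v ∉ Set.range φ := by
      intro hr
      rw [mem_range_phi] at hr
      exact G.irrefl (hr ▸ hG)
    obtain ⟨o, ho⟩ := (core_adj hcore' ⟨v, hv⟩).1 hG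
    exact ⟨o, by rw [ho]⟩
  have hGψ : ∀ (ψ' : Fin 3 → {a : V // a ∉ Set.range φ}),
      IsCoreEmbedding (starT (Fin 3)) G φ ψ' → ∀ j, G.Adj (φ 0) (ψ' j).1 := by
    intro ψ' hcore' j
    exact (core_adj hcore' (ψ' j)).2 ⟨j, rfl⟩
  have contraC : ∀ (w : V), C.Adj (φ 0) w → (∀ x, C.Adj (φ 0) x → x = w) → False := by
    intro w hw hall
    have hset : C.neighborSet (φ 0) = {w} := by
      ext x
      simp only [Set.mem_singleton_iff]
      constructor
      · intro hx
        exact hall x ((SimpleGraph.mem_neighborSet C (φ 0) x).1 hx)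
      · rintro rfl
        exact hw
    rcases hdC (φ 0) with h | h <;> rw [hset, Set.ncard_singleton] at h <;> exact absurd h (by decide)
  -- find a tree edge at u
  have hexT : ∃ o : Fin 3, T.Adj (φ 0) (ψ0 o).1 := by
    have hne : φ 0 ≠ (ψ0 0).1 := (val_ne_u φ (ψ0 0)).symm
    have hwalk := (htree.isConnected.preconnected (φ 0) (ψ0 0).1).some
    have hnnil : ¬ hwalk.Nil := SimpleGraph.Walk.not_nil_of_ne hne
    obtain ⟨v, hadj, -, -⟩ := SimpleGraph.Walk.not_nil_iff.1 hnnil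
    obtain ⟨o, rfl⟩ := hu_edge ψ0 hcore0 v ((hun _ _).1 (Or.inl hadj))
    exact ⟨o, hadj⟩
  obtain ⟨o, hTo⟩ := hexT
  refine hasThreeDecomposition_of_iso (perm_iso (ψ := ψ0) (Equiv.addLeft o)).some ?_
  set ψ : Fin 3 → {a : V // a ∉ Set.range φ} := ψ0 ∘ (Equiv.addLeft o) with hψdef
  have hcore : IsCoreEmbedding (starT (Fin 3)) G φ ψ := perm_core _ hcore0
  have hT0 : T.Adj (φ 0) (ψ 0).1 := by
    have : ψ 0 = ψ0 o := by simp [hψdef]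
    rw [this]
    exact hTo
  have htag : ∀ j, T.Adj (φ 0) (ψ j).1 ∨ C.Adj (φ 0) (ψ j).1 ∨ M.Adj (φ 0) (ψ j).1 :=
    fun j => (hun _ _).2 (hGψ ψ hcore j)
  have honly : ∀ (j : Fin 3) x, C.Adj (φ 0) x →
      (¬ C.Adj (φ 0) (ψ ((j + 1 : Fin 3))).1 ∧ ¬ C.Adj (φ 0) (ψ (j + 2 : Fin 3)).1) →
      x = (ψ j).1 := by
    intro j x hx ⟨hn1, hn2⟩
    obtain ⟨o', rfl⟩ := hu_edge ψ hcore x ((hun _ _).1 (Or.inr (Or.inl hx)))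
    have hcover : ∀ j o' : Fin 3, o' = j ∨ o' = j + 1 ∨ o' = j + 2 := by decide
    rcases hcover j o' with rfl | rfl | rfl
    · rfl
    · exact absurd hx hn1
    · exact absurd hx hn2
  rcases htag 1 with t1 | c1 | m1 <;> rcases htag 2 with t2 | c2 | m2
  · exact caseA hcore hdec hT0 t1 t2
  · -- (T, C) : C-degree 1 at u, contradiction
    exact absurd (contraC _ c2 (fun x hx => honly 2 x hx
      ⟨fun h => hTC _ _ hT0 h, fun h => hTC _ _ t1 h⟩)) not_false
  · exact caseC hcore hdec hT0 t1 m2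
  · exact absurd (contraC _ c1 (fun x hx => honly 1 x hx
      ⟨fun h => hTC _ _ t2 h, fun h => hTC _ _ hT0 h⟩)) not_false
  · exact caseB hcore hdec hT0 c1 c2
  · exact absurd (contraC _ c1 (fun x hx => honly 1 x hx
      ⟨fun h => hCM _ _ h m2, fun h => hTC _ _ hT0 h⟩)) not_false
  · -- (M, T) : swap 1 and 2
    refine hasThreeDecomposition_of_iso (perm_iso (ψ := ψ) (Equiv.swap 1 2)).some ?_
    have hcore2 : IsCoreEmbedding (starT (Fin 3)) G φ (ψ ∘ Equiv.swap 1 2) :=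
      perm_core _ hcore
    have e0 : (ψ ∘ Equiv.swap 1 2) 0 = ψ 0 := by
      simp [Equiv.swap_apply_of_ne_of_ne (by decide : (0 : Fin 3) ≠ 1) (by decide : (0 : Fin 3) ≠ 2)]
    have e1 : (ψ ∘ Equiv.swap 1 2) 1 = ψ 2 := by simp
    have e2 : (ψ ∘ Equiv.swap 1 2) 2 = ψ 1 := by simp
    exact caseC hcore2 hdec (by rw [e0]; exact hT0) (by rw [e1]; exact t2) (by rw [e2]; exact m1)
  · exact absurd (contraC _ c2 (fun x hx => honly 2 x hx
      ⟨fun h => hTC _ _ hT0 h, fun h => hCM _ _ h m1⟩)) not_false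
  · -- (M, M) : M-degree 2 at u, contradiction
    exfalso
    have h1 : (ψ 1).1 ∈ M.neighborSet (φ 0) := m1
    have h2 : (ψ 2).1 ∈ M.neighborSet (φ 0) := m2
    have := (Set.ncard_le_one_iff (Set.toFinite _)).1 (hdM (φ 0)) h1 h2
    exact absurd (psi_inj hcore (Subtype.ext this)) (by decide)
end
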